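/- arXiv:1703.07262 — 9 statements merged into one kernel-verified Lean document; each statement's English description precedes it below -/
import Mathlib

section
/- For every integer q ≥ 0 and all real x, y, and t, the exponential generating function of the hybrid polynomials satisfies ∑_{n=0}^∞ (t^n/n!) P_n^{(q)}(x,y) = C_q(y t²) · e^{x t}, where C_q(z) = ∑_{r=0}^∞ z^r/(r!·(q+r)!) is the Bessel–Tricomi function (both series converge absolutely for all arguments). -/
open Finset

/-- The hybrid polynomials
`P_n^{(q)}(x,y) = n! ∑_{r=0}^{⌊n/2⌋} x^{n-2r} y^r / ((n-2r)!·r!·(r+q)!)`. -/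
noncomputable def hybridP (q n : ℕ) (x y : ℝ) : ℝ :=
  (n.factorial : ℝ) * ∑ r ∈ range (n / 2 + 1),
    x ^ (n - 2 * r) * y ^ r /
      (((n - 2 * r).factorial : ℝ) * (r.factorial : ℝ) * ((r + q).factorial : ℝ))

/-- The Bessel–Tricomi function `C_q(z) = ∑_{r=0}^∞ z^r/(r!·(q+r)!)`. -/
noncomputable def besselTricomi (q : ℕ) (z : ℝ) : ℝ :=
  ∑' r : ℕ, z ^ r / ((r.factorial : ℝ) * ((q + r).factorial : ℝ))

lemma bt_summable_norm (q : ℕ) (z : ℝ) :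
    Summable (fun r : ℕ => ‖z ^ r / ((r.factorial : ℝ) * ((q + r).factorial : ℝ))‖) := by
  refine Summable.of_nonneg_of_le (fun r => norm_nonneg _) ?_
    (Real.summable_pow_div_factorial |z|)
  intro r
  rw [Real.norm_eq_abs, abs_div, abs_pow]
  rw [abs_of_nonneg (by positivity : (0:ℝ) ≤ (r.factorial : ℝ) * ((q + r).factorial : ℝ))]
  apply div_le_div_of_nonneg_left (by positivity) (by positivity)
  calc (r.factorial : ℝ) = r.factorial * 1 := by ring
    _ ≤ r.factorial * (q + r).factorial := by
        apply mul_le_mul_of_nonneg_left _ (by positivity)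
        exact_mod_cast Nat.one_le_iff_ne_zero.mpr (Nat.factorial_ne_zero _)

lemma bt_hasSum (q : ℕ) (z : ℝ) :
    HasSum (fun r : ℕ => z ^ r / ((r.factorial : ℝ) * ((q + r).factorial : ℝ)))
      (besselTricomi q z) :=
  (bt_summable_norm q z).of_norm.hasSum

lemma exp_hasSum (z : ℝ) : HasSum (fun n : ℕ => z ^ n / (n.factorial : ℝ)) (Real.exp z) := by
  rw [Real.exp_eq_exp_ℝ]
  exact NormedSpace.expSeries_div_hasSum_exp z

/-- for every `q ≥ 0` and all real `x, y, t`,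
`∑_{n=0}^∞ (t^n/n!) P_n^{(q)}(x,y) = C_q(y t²) e^{x t}`. -/
theorem hybrid_egf (q : ℕ) (x y t : ℝ) :
    HasSum (fun n : ℕ => t ^ n / (n.factorial : ℝ) * hybridP q n x y)
      (besselTricomi q (y * t ^ 2) * Real.exp (x * t)) := by
  set f1 : ℕ → ℝ := fun r => (y * t ^ 2) ^ r / ((r.factorial : ℝ) * ((q + r).factorial : ℝ))
  set f2 : ℕ → ℝ := fun m => (x * t) ^ m / (m.factorial : ℝ)
  have hf1 : HasSum f1 (besselTricomi q (y * t ^ 2)) := bt_hasSum q _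
  have hf2 : HasSum f2 (Real.exp (x * t)) := exp_hasSum _
  have hf2n : Summable fun m : ℕ => ‖f2 m‖ := by
    have := Real.summable_pow_div_factorial |x * t|
    apply Summable.congr this
    intro m
    simp [f2, abs_div, abs_pow, abs_mul, Nat.abs_cast]
  have hprodsum : Summable fun p : ℕ × ℕ => f1 p.1 * f2 p.2 :=
    summable_mul_of_summable_norm (bt_summable_norm q _) hf2n
  have hprod : HasSum (fun p : ℕ × ℕ => f1 p.1 * f2 p.2)
      (besselTricomi q (y * t ^ 2) * Real.exp (x * t)) := hf1.mul hf2 hprodsum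
  -- F indexed by (n, r) with the term vanishing unless 2r ≤ n
  set F : ℕ × ℕ → ℝ := fun p =>
    if 2 * p.2 ≤ p.1 then
      x ^ (p.1 - 2 * p.2) * y ^ p.2 * t ^ p.1 /
        (((p.1 - 2 * p.2).factorial : ℝ) * (p.2.factorial : ℝ) * ((p.2 + q).factorial : ℝ))
    else 0
  have hg_inj : Function.Injective (fun p : ℕ × ℕ => (p.2 + 2 * p.1, p.1)) := by
    intro a b h
    simp only [Prod.mk.injEq] at h
    obtain ⟨h1, h2⟩ := h
    exact Prod.ext h2 (by omega)
  have hvanish : ∀ p ∉ Set.range (fun p : ℕ × ℕ => (p.2 + 2 * p.1, p.1)), F p = 0 := by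
    intro p hp
    simp only [Set.mem_range, not_exists] at hp
    have h2 : ¬ (2 * p.2 ≤ p.1) := by
      intro hle
      exact hp ⟨p.2, p.1 - 2 * p.2⟩ (Prod.ext (by omega) rfl)
    simp [F, h2]
  have hFg : HasSum F (besselTricomi q (y * t ^ 2) * Real.exp (x * t)) := by
    rw [← Function.Injective.hasSum_iff hg_inj hvanish]
    apply hprod.congr_fun
    intro p
    simp only [F, Function.comp]
    rw [if_pos (by omega)]
    have hp2 : p.2 + 2 * p.1 - 2 * p.1 = p.2 := by omega
    rw [hp2]
    have h1 : ((q + p.1).factorial : ℝ) ≠ 0 := by positivity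
    simp only [f1, f2]
    field_simp [f1, f2, mul_pow, pow_add, pow_mul, Nat.add_comm q p.1]
    ring
  have hinner : ∀ n : ℕ, HasSum (fun r => F (n, r))
      (t ^ n / (n.factorial : ℝ) * hybridP q n x y) := by
    intro n
    have hfin : ∀ r ∉ range (n / 2 + 1), F (n, r) = 0 := by
      intro r hr
      simp only [mem_range, not_lt] at hr
      have : ¬ (2 * r ≤ n) := by omega
      simp [F, this]
    have := hasSum_sum_of_ne_finset_zero (L := SummationFilter.unconditional ℕ) hfin
    convert this using 1
    rw [hybridP, Finset.mul_sum, Finset.mul_sum]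
    apply Finset.sum_congr rfl
    intro r hr
    simp only [mem_range] at hr
    have h2r : 2 * r ≤ n := by omega
    simp only [F, if_pos h2r]
    have hn0 : (n.factorial : ℝ) ≠ 0 := by positivity
    field_simp
  exact HasSum.prod_fiberwise hFg hinner
end

section
/- For every real t, the exponential generating function of the Motzkin numbers satisfies ∑_{n=0}^∞ (t^n/n!) m_n = C_1(t²) · e^t, where C_1(z) = ∑_{r=0}^∞ z^r/(r!·(r+1)!). -/
open Finset

/-- The Motzkin numbers `m_n = n! ∑_{r=0}^{⌊n/2⌋} 1/((n-2r)!·r!·(r+1)!)`,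
as real numbers. -/
noncomputable def motzkinR (n : ℕ) : ℝ :=
  (n.factorial : ℝ) * ∑ r ∈ range (n / 2 + 1),
    1 / (((n - 2 * r).factorial : ℝ) * (r.factorial : ℝ) * ((r + 1).factorial : ℝ))

/-- `∑_{n=0}^∞ (t^n/n!) m_n = C_1(t²) e^t` for every real `t`. -/
theorem motzkin_egf (t : ℝ) :
    HasSum (fun n : ℕ => t ^ n / (n.factorial : ℝ) * motzkinR n)
      (besselTricomi 1 (t ^ 2) * Real.exp t) := by
  classical
  set f : ℕ → ℝ := fun n =>
    if Even n then t ^ n / (((n / 2).factorial : ℝ) * ((n / 2 + 1).factorial : ℝ)) else 0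
    with hfdef
  set g : ℕ → ℝ := fun n => t ^ n / (n.factorial : ℝ) with hgdef
  have hcomp : ∀ r : ℕ, f (2 * r)
      = (t ^ 2) ^ r / ((r.factorial : ℝ) * ((r + 1).factorial : ℝ)) := by
    intro r
    have h2 : 2 * r / 2 = r := Nat.mul_div_cancel_left r two_pos
    simp only [hfdef, h2, pow_mul]
    rw [if_pos (even_two_mul r)]
  -- summability of the Bessel series
  have hFnorm : Summable fun r : ℕ =>
      ‖(t ^ 2) ^ r / ((r.factorial : ℝ) * ((r + 1).factorial : ℝ))‖ := by
    apply Summable.of_nonneg_of_le (fun r => norm_nonneg _)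
      (fun r => ?_) (Real.summable_pow_div_factorial (|t ^ 2|))
    rw [norm_div, norm_pow, Real.norm_eq_abs, Real.norm_eq_abs,
      abs_of_pos (show (0:ℝ) < (r.factorial : ℝ) * ((r + 1).factorial : ℝ) by positivity)]
    gcongr
    exact le_mul_of_one_le_right (by positivity)
      (by exact_mod_cast Nat.one_le_iff_ne_zero.mpr (Nat.factorial_pos (r+1)).ne')
  have hFsum : HasSum (fun r : ℕ =>
      (t ^ 2) ^ r / ((r.factorial : ℝ) * ((r + 1).factorial : ℝ)))
      (besselTricomi 1 (t ^ 2)) := by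
    have h : besselTricomi 1 (t ^ 2)
        = ∑' r : ℕ, (t ^ 2) ^ r / ((r.factorial : ℝ) * ((r + 1).factorial : ℝ)) := by
      unfold besselTricomi
      congr 1; funext r; rw [add_comm 1 r]
    rw [h]
    exact hFnorm.of_norm.hasSum
  -- transfer to `f` via the injection `r ↦ 2r`
  have hi : Function.Injective (fun r : ℕ => 2 * r) :=
    fun a b h => Nat.eq_of_mul_eq_mul_left two_pos h
  have hzero : ∀ n ∉ Set.range (fun r : ℕ => 2 * r), f n = 0 := by
    intro n hn
    simp only [hfdef, ite_eq_right_iff]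
    intro ⟨r, hr⟩
    exact absurd ⟨r, show 2 * r = n by omega⟩ hn
  have hf : HasSum f (besselTricomi 1 (t ^ 2)) := by
    rw [← hi.hasSum_iff hzero]
    have : (f ∘ fun r : ℕ => 2 * r)
        = fun r : ℕ => (t ^ 2) ^ r / ((r.factorial : ℝ) * ((r + 1).factorial : ℝ)) :=
      funext fun r => hcomp r
    rw [this]
    exact hFsum
  have hfnorm : Summable fun n => ‖f n‖ := by
    rw [← hi.summable_iff (f := fun n => ‖f n‖)
      (fun n hn => by show ‖f n‖ = 0; rw [hzero n hn, norm_zero])]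
    have : ((fun n => ‖f n‖) ∘ fun r : ℕ => 2 * r)
        = fun r : ℕ => ‖(t ^ 2) ^ r / ((r.factorial : ℝ) * ((r + 1).factorial : ℝ))‖ :=
      funext fun r => by show ‖f (2 * r)‖ = _; rw [hcomp r]
    rw [this]
    exact hFnorm
  -- the exponential series
  have hg : HasSum g (Real.exp t) := by
    rw [Real.exp_eq_exp_ℝ]
    exact NormedSpace.expSeries_div_hasSum_exp t
  have hgnorm : Summable fun n => ‖g n‖ := by
    apply (Real.summable_pow_div_factorial (|t|)).congr
    intro n
    rw [hgdef]
    rw [norm_div, Real.norm_eq_abs, Real.norm_eq_abs, abs_pow,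
      abs_of_pos (show (0:ℝ) < (n.factorial : ℝ) by positivity)]
  -- Cauchy product
  have hprod : HasSum (fun n => ∑ kl ∈ Finset.HasAntidiagonal.antidiagonal n, f kl.1 * g kl.2)
      (besselTricomi 1 (t ^ 2) * Real.exp t) := by
    have hs : Summable fun n => ∑ kl ∈ Finset.HasAntidiagonal.antidiagonal n, f kl.1 * g kl.2 :=
      (summable_norm_sum_mul_antidiagonal_of_summable_norm hfnorm hgnorm).of_norm
    have ht := tsum_mul_tsum_eq_tsum_sum_antidiagonal_of_summable_norm hfnorm hgnorm
    rw [hf.tsum_eq, hg.tsum_eq] at ht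
    rw [ht]
    exact hs.hasSum
  -- identify the terms
  have key : ∀ n : ℕ, t ^ n / (n.factorial : ℝ) * motzkinR n
      = ∑ kl ∈ Finset.HasAntidiagonal.antidiagonal n, f kl.1 * g kl.2 := by
    intro n
    have hne : ((n.factorial : ℝ)) ≠ 0 := by positivity
    rw [Finset.Nat.sum_antidiagonal_eq_sum_range_succ_mk]
    rw [motzkinR, ← mul_assoc, div_mul_cancel₀ _ hne, Finset.mul_sum]
    rw [show (∑ i ∈ range (n + 1), f i * g (n - i))
        = ∑ i ∈ (range (n + 1)).filter (fun i => Even i), f i * g (n - i) from by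
      rw [Finset.sum_filter]
      refine Finset.sum_congr rfl fun i _ => ?_
      by_cases h : Even i
      · rw [if_pos h]
      · rw [if_neg h]
        have : f i = 0 := by rw [hfdef]; simp [h]
        rw [this, zero_mul]]
    refine Finset.sum_nbij' (fun r => 2 * r) (fun i => i / 2) ?_ ?_ ?_ ?_ ?_
    · intro r hr
      simp only [Finset.mem_filter, Finset.mem_range] at *
      exact ⟨by omega, even_two_mul r⟩
    · intro i hi2
      simp only [Finset.mem_filter, Finset.mem_range] at *
      omega
    · intro r _
      exact Nat.mul_div_cancel_left r two_pos
    · intro i hi2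
      simp only [Finset.mem_filter, Finset.mem_range] at hi2
      obtain ⟨_, k, hk⟩ := hi2
      show 2 * (i / 2) = i
      omega
    · intro r hr
      simp only [Finset.mem_range] at hr
      rw [hcomp r, hgdef]
      have h2r : 2 * r ≤ n := by omega
      have hpow : (t ^ 2) ^ r * t ^ (n - 2 * r) = t ^ n := by
        rw [← pow_mul, ← pow_add]
        congr 1; omega
      rw [div_mul_div_comm, hpow, mul_one_div]
      congr 1
      ring
  exact hprod.congr_fun fun n => key n
end

section
/- For every integer l ≥ 0 and all real x, y, t, the shifted-index exponential generating function of the two-variable Hermite polynomials satisfies ∑_{n=0}^∞ (t^n/n!) H_{n+l}(x,y) = H_l(x + 2yt, y) · e^{xt + yt²}. -/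
open Finset

/-- The two-variable Hermite (Kampé de Fériet) polynomials
`H_n(x,y) = n! ∑_{r=0}^{⌊n/2⌋} x^{n-2r} y^r / ((n-2r)!·r!)`. -/
noncomputable def hermite2 (n : ℕ) (x y : ℝ) : ℝ :=
  (n.factorial : ℝ) * ∑ r ∈ range (n / 2 + 1),
    x ^ (n - 2 * r) * y ^ r / (((n - 2 * r).factorial : ℝ) * (r.factorial : ℝ))

lemma hermite2_zero (x y : ℝ) : hermite2 0 x y = 1 := by
  simp [hermite2, Nat.factorial]

lemma hermite2_one (x y : ℝ) : hermite2 1 x y = x := by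
  simp [hermite2, Nat.factorial]

lemma hermite2_eq (n : ℕ) (x y : ℝ) :
    hermite2 n x y = ∑ r ∈ range (n / 2 + 1),
      ((n.factorial : ℝ) / (((n - 2 * r).factorial : ℝ) * (r.factorial : ℝ)))
        * (x ^ (n - 2 * r) * y ^ r) := by
  rw [hermite2, mul_sum]
  refine sum_congr rfl fun r _ => by ring

lemma key_term (u r : ℕ) (x y : ℝ) :
    (((u + 2 * r + 3).factorial : ℝ) / (((u + 1).factorial : ℝ) * ((r + 1).factorial : ℝ)))
        * (x ^ (u + 1) * y ^ (r + 1))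
      = x * ((((u + 2 * r + 2).factorial : ℝ) / ((u.factorial : ℝ) * ((r + 1).factorial : ℝ)))
            * (x ^ u * y ^ (r + 1)))
        + 2 * y * ((u : ℝ) + 2 * r + 2)
          * ((((u + 2 * r + 1).factorial : ℝ) / (((u + 1).factorial : ℝ) * ((r.factorial : ℝ))))
            * (x ^ (u + 1) * y ^ r)) := by
  have h1 : (u + 2 * r + 3).factorial = (u + 2 * r + 3) * (u + 2 * r + 2).factorial := rfl
  have h2 : (u + 2 * r + 2).factorial = (u + 2 * r + 2) * (u + 2 * r + 1).factorial := rfl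
  have h3 : (u + 1).factorial = (u + 1) * u.factorial := rfl
  have h4 : (r + 1).factorial = (r + 1) * r.factorial := rfl
  have hu : (u.factorial : ℝ) ≠ 0 := Nat.cast_ne_zero.2 u.factorial_ne_zero
  have hr : (r.factorial : ℝ) ≠ 0 := Nat.cast_ne_zero.2 r.factorial_ne_zero
  rw [h1, h2, h3, h4]
  push_cast
  field_simp
  ring

lemma key_first (N : ℕ) (x y : ℝ) :
    (((N + 1).factorial : ℝ) / (((N + 1 - 2 * 0).factorial : ℝ) * ((Nat.factorial 0 : ℕ) : ℝ)))
        * (x ^ (N + 1 - 2 * 0) * y ^ 0)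
      = x * (((N.factorial : ℝ) / (((N - 2 * 0).factorial : ℝ) * ((Nat.factorial 0 : ℕ) : ℝ)))
            * (x ^ (N - 2 * 0) * y ^ 0)) := by
  have h1 : ((N + 1).factorial : ℝ) ≠ 0 := Nat.cast_ne_zero.2 (N+1).factorial_ne_zero
  have h2 : (N.factorial : ℝ) ≠ 0 := Nat.cast_ne_zero.2 N.factorial_ne_zero
  simp only [Nat.mul_zero, Nat.sub_zero, Nat.factorial_zero, Nat.cast_one, mul_one, pow_zero]
  rw [div_self h1, div_self h2, pow_succ]
  ring

lemma hermite2_succ_succ (n : ℕ) (x y : ℝ) :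
    hermite2 (n + 2) x y
      = x * hermite2 (n + 1) x y + 2 * y * ((n : ℝ) + 1) * hermite2 n x y := by
  rcases Nat.even_or_odd n with ⟨m, rfl⟩ | ⟨m, rfl⟩
  · -- even case : n = m + m
    have e2 : (m + m + 2) / 2 + 1 = m + 2 := by omega
    have e1 : (m + m + 1) / 2 + 1 = m + 1 := by omega
    have e0 : (m + m) / 2 + 1 = m + 1 := by omega
    rw [hermite2_eq, hermite2_eq, hermite2_eq, e2, e1, e0]
    conv_lhs => rw [Finset.sum_range_succ', Finset.sum_range_succ]
    conv_rhs => rw [Finset.sum_range_succ', Finset.sum_range_succ]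
    have hmain : ∀ r ∈ range m,
        ((↑(m + m + 2).factorial : ℝ) / (↑(m + m + 2 - 2 * (r + 1)).factorial * ↑(r + 1).factorial)) *
            (x ^ (m + m + 2 - 2 * (r + 1)) * y ^ (r + 1))
          = x * ((↑(m + m + 1).factorial / (↑(m + m + 1 - 2 * (r + 1)).factorial * ↑(r + 1).factorial)) *
                (x ^ (m + m + 1 - 2 * (r + 1)) * y ^ (r + 1)))
            + 2 * y * ((↑(m + m) : ℝ) + 1) *
              ((↑(m + m).factorial / (↑(m + m - 2 * r).factorial * ↑r.factorial)) *
                (x ^ (m + m - 2 * r) * y ^ r)) := by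
      intro r hr
      have hrm : r < m := mem_range.mp hr
      obtain ⟨u, hu⟩ : ∃ u, m + m = u + 2 * r + 1 := ⟨m + m - 2 * r - 1, by omega⟩
      rw [hu]
      have g1 : u + 2 * r + 1 + 2 - 2 * (r + 1) = u + 1 := by omega
      have g2 : u + 2 * r + 1 + 1 - 2 * (r + 1) = u := by omega
      have g3 : u + 2 * r + 1 - 2 * r = u + 1 := by omega
      have g4 : u + 2 * r + 1 + 2 = u + 2 * r + 3 := by omega
      have g5 : u + 2 * r + 1 + 1 = u + 2 * r + 2 := by omega
      rw [g1, g2, g3, g4, g5]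
      have hk := key_term u r x y
      push_cast at hk ⊢
      linear_combination hk
    rw [Finset.sum_congr rfl hmain, Finset.sum_add_distrib]
    have hF0 : ((↑(m + m + 2).factorial : ℝ) / (↑(m + m + 2 - 2 * 0).factorial * ↑(Nat.factorial 0))) *
          (x ^ (m + m + 2 - 2 * 0) * y ^ 0)
        = x * ((↑(m + m + 1).factorial / (↑(m + m + 1 - 2 * 0).factorial * ↑(Nat.factorial 0))) *
            (x ^ (m + m + 1 - 2 * 0) * y ^ 0)) := by
      simp only [Nat.mul_zero, Nat.sub_zero, Nat.factorial_zero, Nat.cast_one, mul_one, pow_zero]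
      rw [div_self (Nat.cast_ne_zero.2 (m + m + 2).factorial_ne_zero),
        div_self (Nat.cast_ne_zero.2 (m + m + 1).factorial_ne_zero),
        show m + m + 2 = (m + m + 1) + 1 from rfl, pow_succ]
      ring
    have hFm : ((↑(m + m + 2).factorial : ℝ) / (↑(m + m + 2 - 2 * (m + 1)).factorial * ↑(m + 1).factorial)) *
          (x ^ (m + m + 2 - 2 * (m + 1)) * y ^ (m + 1))
        = 2 * y * ((↑(m + m) : ℝ) + 1) *
            ((↑(m + m).factorial / (↑(m + m - 2 * m).factorial * ↑m.factorial)) *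
              (x ^ (m + m - 2 * m) * y ^ m)) := by
      have h0 : m + m + 2 - 2 * (m + 1) = 0 := by omega
      have h0' : m + m - 2 * m = 0 := by omega
      rw [h0, h0', show m + m + 2 = (m + m + 1) + 1 from rfl, Nat.factorial_succ ((m + m + 1)),
        Nat.factorial_succ (m + m), Nat.factorial_succ m]
      have hm : ((Nat.factorial m : ℕ) : ℝ) ≠ 0 := Nat.cast_ne_zero.2 m.factorial_ne_zero
      simp only [Nat.factorial_zero, Nat.cast_one, one_mul, pow_zero, pow_succ]
      push_cast
      field_simp
      ring
    conv_rhs => rw [mul_add x, mul_add (2 * y * ((↑(m + m) : ℝ) + 1)), Finset.mul_sum, Finset.mul_sum]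
    linear_combination hF0 + hFm
  · -- odd case : n = 2 * m + 1
    have e2 : (2 * m + 1 + 2) / 2 + 1 = m + 2 := by omega
    have e1 : (2 * m + 1 + 1) / 2 + 1 = m + 2 := by omega
    have e0 : (2 * m + 1) / 2 + 1 = m + 1 := by omega
    rw [hermite2_eq, hermite2_eq, hermite2_eq, e2, e1, e0]
    conv_lhs => rw [Finset.sum_range_succ']
    conv_rhs => rw [Finset.sum_range_succ']
    have hmain : ∀ r ∈ range (m + 1),
        ((↑(2 * m + 1 + 2).factorial : ℝ) / (↑(2 * m + 1 + 2 - 2 * (r + 1)).factorial * ↑(r + 1).factorial)) *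
            (x ^ (2 * m + 1 + 2 - 2 * (r + 1)) * y ^ (r + 1))
          = x * ((↑(2 * m + 1 + 1).factorial / (↑(2 * m + 1 + 1 - 2 * (r + 1)).factorial * ↑(r + 1).factorial)) *
                (x ^ (2 * m + 1 + 1 - 2 * (r + 1)) * y ^ (r + 1)))
            + 2 * y * ((↑(2 * m + 1) : ℝ) + 1) *
              ((↑(2 * m + 1).factorial / (↑(2 * m + 1 - 2 * r).factorial * ↑r.factorial)) *
                (x ^ (2 * m + 1 - 2 * r) * y ^ r)) := by
      intro r hr
      have hrm : r < m + 1 := mem_range.mp hr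
      obtain ⟨u, hu⟩ : ∃ u, 2 * m + 1 = u + 2 * r + 1 := ⟨2 * m - 2 * r, by omega⟩
      rw [hu]
      have g1 : u + 2 * r + 1 + 2 - 2 * (r + 1) = u + 1 := by omega
      have g2 : u + 2 * r + 1 + 1 - 2 * (r + 1) = u := by omega
      have g3 : u + 2 * r + 1 - 2 * r = u + 1 := by omega
      have g4 : u + 2 * r + 1 + 2 = u + 2 * r + 3 := by omega
      have g5 : u + 2 * r + 1 + 1 = u + 2 * r + 2 := by omega
      rw [g1, g2, g3, g4, g5]
      have hk := key_term u r x y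
      push_cast at hk ⊢
      linear_combination hk
    rw [Finset.sum_congr rfl hmain, Finset.sum_add_distrib]
    have hF0 : ((↑(2 * m + 1 + 2).factorial : ℝ) / (↑(2 * m + 1 + 2 - 2 * 0).factorial * ↑(Nat.factorial 0))) *
          (x ^ (2 * m + 1 + 2 - 2 * 0) * y ^ 0)
        = x * ((↑(2 * m + 1 + 1).factorial / (↑(2 * m + 1 + 1 - 2 * 0).factorial * ↑(Nat.factorial 0))) *
            (x ^ (2 * m + 1 + 1 - 2 * 0) * y ^ 0)) := by
      simp only [Nat.mul_zero, Nat.sub_zero, Nat.factorial_zero, Nat.cast_one, mul_one, pow_zero]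
      rw [div_self (Nat.cast_ne_zero.2 (2 * m + 1 + 2).factorial_ne_zero),
        div_self (Nat.cast_ne_zero.2 (2 * m + 1 + 1).factorial_ne_zero),
        show 2 * m + 1 + 2 = (2 * m + 1 + 1) + 1 from rfl, pow_succ]
      ring
    conv_rhs => rw [mul_add x, Finset.mul_sum, Finset.mul_sum]
    linear_combination hF0

lemma hermite2_succ (n : ℕ) (x y : ℝ) :
    hermite2 (n + 1) x y = x * hermite2 n x y + 2 * y * (n : ℝ) * hermite2 (n - 1) x y := by
  cases n with
  | zero => simp [hermite2_zero, hermite2_one]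
  | succ k =>
      have := hermite2_succ_succ k x y
      push_cast at this ⊢
      simpa using this

/-- Auxiliary equivalence between `Fin (n/2+1)` and the fiber of `(a,r) ↦ a + 2r` over `n`. -/
def hermite2FiberEquiv (n : ℕ) : Fin (n / 2 + 1) ≃ {p : ℕ × ℕ // p.1 + 2 * p.2 = n} where
  toFun r := ⟨(n - 2 * r.1, r.1), by have := r.2; omega⟩
  invFun p := ⟨p.1.2, by have := p.2; omega⟩
  left_inv r := rfl
  right_inv p := by
    obtain ⟨⟨a, b⟩, hp⟩ := p
    simp only [Subtype.mk.injEq, Prod.mk.injEq]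
    constructor
    · omega
    · trivial

set_option maxHeartbeats 1000000 in
lemma hermite2_egf (x y t : ℝ) :
    HasSum (fun n : ℕ => t ^ n / (n.factorial : ℝ) * hermite2 n x y)
      (Real.exp (x * t + y * t ^ 2)) := by
  have hf : HasSum (fun a : ℕ => (x * t) ^ a / (a.factorial : ℝ)) (Real.exp (x * t)) := by
    rw [Real.exp_eq_exp_ℝ]; exact NormedSpace.expSeries_div_hasSum_exp (x * t)
  have hg : HasSum (fun b : ℕ => (y * t ^ 2) ^ b / (b.factorial : ℝ)) (Real.exp (y * t ^ 2)) := by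
    rw [Real.exp_eq_exp_ℝ]; exact NormedSpace.expSeries_div_hasSum_exp (y * t ^ 2)
  have hnorm : ∀ (c : ℝ), Summable fun a : ℕ => ‖c ^ a / (a.factorial : ℝ)‖ := by
    intro c
    have := (NormedSpace.expSeries_div_hasSum_exp (|c| : ℝ)).summable
    refine this.congr fun a => ?_
    rw [norm_div, norm_pow, Real.norm_eq_abs, Real.norm_eq_abs,
      abs_of_nonneg (by positivity : (0:ℝ) ≤ (a.factorial : ℝ))]
  have hsum : Summable fun p : ℕ × ℕ =>
      ((x * t) ^ p.1 / (p.1.factorial : ℝ)) * ((y * t ^ 2) ^ p.2 / (p.2.factorial : ℝ)) :=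
    summable_mul_of_summable_norm (hnorm (x * t)) (hnorm (y * t ^ 2))
  have hprod : HasSum (fun p : ℕ × ℕ =>
      ((x * t) ^ p.1 / (p.1.factorial : ℝ)) * ((y * t ^ 2) ^ p.2 / (p.2.factorial : ℝ)))
      (Real.exp (x * t) * Real.exp (y * t ^ 2)) := hf.mul hg hsum
  rw [← Real.exp_add] at hprod
  have hsig : HasSum (fun q : Σ n : ℕ, {p : ℕ × ℕ // p.1 + 2 * p.2 = n} =>
      (x * t) ^ q.2.1.1 / (q.2.1.1.factorial : ℝ) * ((y * t ^ 2) ^ q.2.1.2 / (q.2.1.2.factorial : ℝ)))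
      (Real.exp (x * t + y * t ^ 2)) :=
    ((Equiv.sigmaFiberEquiv (fun p : ℕ × ℕ => p.1 + 2 * p.2)).hasSum_iff).mpr hprod
  refine hsig.sigma fun n => ?_
  refine (hermite2FiberEquiv n).hasSum_iff.mp ?_
  have hv : ∑ r ∈ range (n / 2 + 1),
      (x * t) ^ (n - 2 * r) / ((n - 2 * r).factorial : ℝ)
        * ((y * t ^ 2) ^ r / (r.factorial : ℝ))
      = t ^ n / (n.factorial : ℝ) * hermite2 n x y := by
    rw [hermite2]
    have hn : (n.factorial : ℝ) ≠ 0 := Nat.cast_ne_zero.2 n.factorial_ne_zero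
    rw [show t ^ n / (n.factorial : ℝ) * ((n.factorial : ℝ) * ∑ r ∈ range (n / 2 + 1),
        x ^ (n - 2 * r) * y ^ r / (((n - 2 * r).factorial : ℝ) * (r.factorial : ℝ)))
      = t ^ n * ∑ r ∈ range (n / 2 + 1),
        x ^ (n - 2 * r) * y ^ r / (((n - 2 * r).factorial : ℝ) * (r.factorial : ℝ)) from by
        field_simp]
    rw [Finset.mul_sum]
    refine Finset.sum_congr rfl fun r hr => ?_
    have h : n - 2 * r + 2 * r = n := by have := Finset.mem_range.mp hr; omega
    have hpow : (x * t) ^ (n - 2 * r) * (y * t ^ 2) ^ r = t ^ n * (x ^ (n - 2 * r) * y ^ r) := by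
      calc (x * t) ^ (n - 2 * r) * (y * t ^ 2) ^ r
          = x ^ (n - 2 * r) * y ^ r * (t ^ (n - 2 * r) * t ^ (2 * r)) := by
            rw [mul_pow, mul_pow, ← pow_mul]; ring
        _ = t ^ n * (x ^ (n - 2 * r) * y ^ r) := by rw [← pow_add, h]; ring
    rw [div_mul_div_comm, hpow, mul_div_assoc]
  have hfin := hasSum_fintype (fun r : Fin (n / 2 + 1) =>
    (x * t) ^ (n - 2 * r.1) / ((n - 2 * r.1).factorial : ℝ)
      * ((y * t ^ 2) ^ r.1 / (r.1.factorial : ℝ)))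
  rw [Fin.sum_univ_eq_sum_range (fun r =>
    (x * t) ^ (n - 2 * r) / ((n - 2 * r).factorial : ℝ)
      * ((y * t ^ 2) ^ r / (r.factorial : ℝ))), hv] at hfin
  exact hfin

lemma hermite2_shift_hasSum {l : ℕ} {S : ℝ} (x y t : ℝ)
    (h : HasSum (fun n : ℕ => t ^ n / (n.factorial : ℝ) * hermite2 (n + l) x y) S) :
    HasSum (fun n : ℕ => t ^ n / (n.factorial : ℝ) * (2 * y * (n : ℝ) * hermite2 (n - 1 + l) x y))
      (2 * y * t * S) := by
  have h2 := h.mul_left (2 * y * t)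
  have hfe : (fun k : ℕ => 2 * y * t * (t ^ k / (k.factorial : ℝ) * hermite2 (k + l) x y))
      = fun k : ℕ => t ^ (k + 1) / ((k + 1).factorial : ℝ)
          * (2 * y * (((k + 1 : ℕ)) : ℝ) * hermite2 (k + 1 - 1 + l) x y) := by
    funext k
    have hk1 : k + 1 - 1 = k := rfl
    rw [hk1]
    have hfac : (((k + 1).factorial : ℕ) : ℝ) = ((k : ℝ) + 1) * (k.factorial : ℝ) := by
      rw [Nat.factorial_succ]; push_cast; ring
    have hne : (k.factorial : ℝ) ≠ 0 := Nat.cast_ne_zero.2 k.factorial_ne_zero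
    have hne2 : (k : ℝ) + 1 ≠ 0 := by positivity
    rw [hfac, pow_succ]
    push_cast
    field_simp
  rw [hfe] at h2
  have h3 := (hasSum_nat_add_iff (f := fun j : ℕ => t ^ j / (j.factorial : ℝ)
      * (2 * y * (j : ℝ) * hermite2 (j - 1 + l) x y)) 1).mp h2
  simpa using h3

/-- for every `l ≥ 0` and all real `x, y, t`,
`∑_{n=0}^∞ (t^n/n!) H_{n+l}(x,y) = H_l(x + 2yt, y) e^{xt + yt²}`. -/
theorem hermite2_shifted_egf (l : ℕ) (x y t : ℝ) :
    HasSum (fun n : ℕ => t ^ n / (n.factorial : ℝ) * hermite2 (n + l) x y)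
      (hermite2 l (x + 2 * y * t) y * Real.exp (x * t + y * t ^ 2)) := by
  induction l using Nat.twoStepInduction with
  | zero =>
      simpa [hermite2_zero] using hermite2_egf x y t
  | one =>
      have h0 : HasSum (fun n : ℕ => t ^ n / (n.factorial : ℝ) * hermite2 (n + 0) x y)
          (hermite2 0 (x + 2 * y * t) y * Real.exp (x * t + y * t ^ 2)) := by
        simpa [hermite2_zero] using hermite2_egf x y t
      have C := hermite2_shift_hasSum x y t h0
      have A := h0.mul_left x
      have total := A.add C
      have hfun : (fun n : ℕ => x * (t ^ n / (n.factorial : ℝ) * hermite2 (n + 0) x y)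
            + t ^ n / (n.factorial : ℝ) * (2 * y * (n : ℝ) * hermite2 (n - 1 + 0) x y))
          = fun n : ℕ => t ^ n / (n.factorial : ℝ) * hermite2 (n + 1) x y := by
        funext n
        rw [Nat.add_zero, Nat.add_zero, hermite2_succ n x y]
        ring
      rw [hfun] at total
      have hval : x * (hermite2 0 (x + 2 * y * t) y * Real.exp (x * t + y * t ^ 2))
            + 2 * y * t * (hermite2 0 (x + 2 * y * t) y * Real.exp (x * t + y * t ^ 2))
          = hermite2 1 (x + 2 * y * t) y * Real.exp (x * t + y * t ^ 2) := by
        rw [hermite2_zero, hermite2_one]; ring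
      rw [hval] at total
      exact total
  | more n ih0 ih1 =>
      have A := ih1.mul_left x
      have B := ih0.mul_left (2 * y * ((n : ℝ) + 1))
      have C := hermite2_shift_hasSum x y t ih1
      have total := (A.add B).add C
      have hfun : (fun k : ℕ => (x * (t ^ k / (k.factorial : ℝ) * hermite2 (k + (n + 1)) x y)
              + 2 * y * ((n : ℝ) + 1) * (t ^ k / (k.factorial : ℝ) * hermite2 (k + n) x y))
            + t ^ k / (k.factorial : ℝ) * (2 * y * (k : ℝ) * hermite2 (k - 1 + (n + 1)) x y))
          = fun k : ℕ => t ^ k / (k.factorial : ℝ) * hermite2 (k + (n + 2)) x y := by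
        funext k
        cases k with
        | zero =>
            simp only [Nat.zero_add, Nat.cast_zero, pow_zero, Nat.factorial_zero, Nat.cast_one]
            rw [hermite2_succ_succ n x y]
            ring
        | succ j =>
            rw [show j + 1 - 1 + (n + 1) = j + n + 1 from by omega,
              show j + 1 + (n + 2) = (j + n + 1) + 2 from by omega,
              show j + 1 + (n + 1) = (j + n + 1) + 1 from by omega,
              show j + 1 + n = j + n + 1 from by omega,
              hermite2_succ_succ (j + n + 1) x y]
            push_cast
            ring
      rw [hfun] at total
      have hval : (x * (hermite2 (n + 1) (x + 2 * y * t) y * Real.exp (x * t + y * t ^ 2))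
              + 2 * y * ((n : ℝ) + 1) * (hermite2 n (x + 2 * y * t) y * Real.exp (x * t + y * t ^ 2)))
            + 2 * y * t * (hermite2 (n + 1) (x + 2 * y * t) y * Real.exp (x * t + y * t ^ 2))
          = hermite2 (n + 2) (x + 2 * y * t) y * Real.exp (x * t + y * t ^ 2) := by
        linear_combination Real.exp (x * t + y * t ^ 2) * (hermite2_succ_succ n (x + 2 * y * t) y).symm
      rw [hval] at total
      exact total
end

section
/- For every integer n ≥ 0 and all real x, y, the index-duplication formula for the two-variable Hermite polynomials holds: H_{2n}(x,y) = ∑_{r=0}^{n} binomial(n,r)² · r! · (2y)^r · (H_{n-r}(x,y))². -/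
open Finset

noncomputable def hterm (x y : ℝ) (k r : ℕ) : ℝ :=
  if 2*r ≤ k then ((k.choose (2*r) * (2*r).choose r * r.factorial : ℕ) : ℝ) * x^(k-2*r) * y^r else 0

lemma factcast (n r : ℕ) (h : 2*r ≤ n) :
    ((n.choose (2*r) * (2*r).choose r * r.factorial : ℕ) : ℝ)
      = (n.factorial : ℝ) / (((n - 2*r).factorial : ℝ) * (r.factorial : ℝ)) := by
  have h1 := Nat.choose_mul_factorial_mul_factorial h
  have h2 := Nat.choose_mul_factorial_mul_factorial (show r ≤ 2*r by omega)
  have h3 : 2*r - r = r := by omega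
  rw [h3] at h2
  have hpos : (0:ℝ) < (((n - 2*r).factorial : ℝ) * (r.factorial : ℝ)) := by
    have := Nat.factorial_pos (n-2*r)
    have := Nat.factorial_pos r
    positivity
  rw [eq_div_iff (ne_of_gt hpos)]
  have : (n.choose (2*r) * (2*r).choose r * r.factorial) * ((n - 2*r).factorial * r.factorial) = n.factorial := by
    calc (n.choose (2*r) * (2*r).choose r * r.factorial) * ((n - 2*r).factorial * r.factorial)
        = (n.choose (2*r)) * ((2*r).choose r * r.factorial * r.factorial) * (n - 2*r).factorial := by ring
      _ = (n.choose (2*r)) * (2*r).factorial * (n - 2*r).factorial := by rw [h2]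
      _ = n.factorial := h1
  exact_mod_cast this

lemma hermite2_eq_s5 (x y : ℝ) (k : ℕ) : hermite2 k x y = ∑ r ∈ range (k+1), hterm x y k r := by
  calc hermite2 k x y = ∑ r ∈ range (k/2+1),
        (k.factorial : ℝ) * (x ^ (k - 2 * r) * y ^ r / (((k - 2 * r).factorial : ℝ) * (r.factorial : ℝ))) := by
        rw [hermite2, Finset.mul_sum]
    _ = ∑ r ∈ range (k/2+1), hterm x y k r := by
        apply Finset.sum_congr rfl
        intro r hr
        simp only [Finset.mem_range] at hr
        have h2r : 2*r ≤ k := by omega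
        rw [hterm, if_pos h2r, factcast k r h2r]
        ring
    _ = ∑ r ∈ range (k+1), hterm x y k r := by
        apply Finset.sum_subset (Finset.range_subset_range.mpr (by omega : k/2+1 ≤ k+1))
        intro r _ h2
        simp only [Finset.mem_range] at h2
        rw [hterm, if_neg (by omega)]

lemma fact_ne (k : ℕ) : ((k.factorial : ℝ)) ≠ 0 := by
  exact_mod_cast (Nat.factorial_pos k).ne'

lemma hermite2_rec (x y : ℝ) (n : ℕ) :
    hermite2 (n+2) x y = x * hermite2 (n+1) x y + 2*y*(n+1)*hermite2 n x y := by
  have key : ∀ s : ℕ, hterm x y (n+2) (s+1)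
      = x * hterm x y (n+1) (s+1) + 2*y*(n+1) * hterm x y n s := by
    intro s
    rcases lt_trichotomy (2*s) n with hlt | heq | hgt
    · -- all three ifs true
      have c1 : 2*(s+1) ≤ n+2 := by omega
      have c2 : 2*(s+1) ≤ n+1 := by omega
      have c3 : 2*s ≤ n := by omega
      rw [hterm, if_pos c1, hterm, if_pos c2, hterm, if_pos c3,
        factcast _ _ c1, factcast _ _ c2, factcast _ _ c3]
      obtain ⟨a, ha⟩ : ∃ a, n = a + 2*s + 1 := ⟨n - 2*s - 1, by omega⟩
      subst ha
      rw [show a+2*s+1+2 - 2*(s+1) = a+1 from by omega,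
          show a+2*s+1+1 - 2*(s+1) = a from by omega,
          show a+2*s+1 - 2*s = a+1 from by omega]
      rw [show (a+2*s+1+2) = (a+2*s+2)+1 from by ring, Nat.factorial_succ,
          show (a+2*s+2) = (a+2*s+1)+1 from by ring, Nat.factorial_succ,
          show (s+1).factorial = (s+1)*s.factorial from rfl,
          show (a+1).factorial = (a+1)*a.factorial from rfl]
      have h1 := fact_ne a
      have h2 := fact_ne s
      have h3 := fact_ne (a+2*s+1)
      push_cast
      field_simp
      ring
    · -- middle if false
      have c1 : 2*(s+1) ≤ n+2 := by omega
      have c2 : ¬ (2*(s+1) ≤ n+1) := by omega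
      have c3 : 2*s ≤ n := by omega
      rw [hterm, if_pos c1, hterm, if_neg c2, hterm, if_pos c3,
        factcast _ _ c1, factcast _ _ c3]
      subst heq
      rw [show 2*s+2 - 2*(s+1) = 0 from by omega, show 2*s - 2*s = 0 from by omega]
      rw [show (2*s+2) = (2*s+1)+1 from by ring, Nat.factorial_succ,
          show (2*s+1) = (2*s)+1 from by ring, Nat.factorial_succ,
          show (s+1).factorial = (s+1)*s.factorial from rfl]
      have h2 := fact_ne s
      have h3 := fact_ne (2*s)
      push_cast
      field_simp
      ring
    · have c1 : ¬ (2*(s+1) ≤ n+2) := by omega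
      have c2 : ¬ (2*(s+1) ≤ n+1) := by omega
      have c3 : ¬ (2*s ≤ n) := by omega
      rw [hterm, if_neg c1, hterm, if_neg c2, hterm, if_neg c3]
      ring
  calc hermite2 (n+2) x y = ∑ r ∈ range (n+3), hterm x y (n+2) r := hermite2_eq_s5 x y (n+2)
    _ = ∑ s ∈ range (n+2), hterm x y (n+2) (s+1) + hterm x y (n+2) 0 :=
        Finset.sum_range_succ' _ _
    _ = ∑ s ∈ range (n+2), (x * hterm x y (n+1) (s+1) + 2*y*(n+1) * hterm x y n s)
          + x * hterm x y (n+1) 0 := by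
        rw [Finset.sum_congr rfl (fun s _ => key s)]
        congr 1
        simp only [hterm, if_pos (by omega : 2*0 ≤ n+2), if_pos (by omega : 2*0 ≤ n+1)]
        simp [pow_succ]
        ring
    _ = x * (∑ s ∈ range (n+2), hterm x y (n+1) (s+1) + hterm x y (n+1) 0)
          + 2*y*(n+1) * ∑ s ∈ range (n+2), hterm x y n s := by
        rw [Finset.sum_add_distrib, ← Finset.mul_sum, ← Finset.mul_sum]
        ring
    _ = x * ∑ r ∈ range (n+3), hterm x y (n+1) r
          + 2*y*(n+1) * ∑ s ∈ range (n+2), hterm x y n s := by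
        rw [← Finset.sum_range_succ']
    _ = x * hermite2 (n+1) x y + 2*y*(n+1)*hermite2 n x y := by
        rw [Finset.sum_range_succ (hterm x y (n+1)) (n+2),
            Finset.sum_range_succ (hterm x y n) (n+1)]
        rw [show hterm x y (n+1) (n+2) = 0 from by rw [hterm, if_neg (by omega)],
            show hterm x y n (n+1) = 0 from by rw [hterm, if_neg (by omega)]]
        rw [← hermite2_eq_s5, ← hermite2_eq_s5]
        ring

lemma hermite2_rec1 (x y : ℝ) (k : ℕ) :
    hermite2 (k+1) x y = x * hermite2 k x y + 2*y*(k:ℝ)*hermite2 (k-1) x y := by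
  cases k with
  | zero => simp [hermite2]
  | succ j =>
    have := hermite2_rec x y j
    simpa using this

noncomputable def FF (x y : ℝ) (m n : ℕ) : ℝ :=
  ∑ r ∈ range (n+1), (m.choose r : ℝ) * (n.choose r : ℝ) * (r.factorial : ℝ) * (2*y)^r
    * hermite2 (m-r) x y * hermite2 (n-r) x y

lemma idN2 (m s : ℕ) : (s+1) * m.choose (s+1) = m * ((m-1).choose s) := by
  cases m with
  | zero => simp
  | succ m' =>
    have h := Nat.add_one_mul_choose_eq m' s
    rw [Nat.succ_sub_one, h]
    exact mul_comm _ _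

lemma idN3 (n r : ℕ) : (n+1-r) * (n+1).choose r = (n+1) * n.choose r := by
  calc (n+1-r) * (n+1).choose r = (n+1).choose r * (n+1-r) := mul_comm _ _
    _ = (n+1).choose (r+1) * (r+1) := (Nat.choose_succ_right_eq (n+1) r).symm
    _ = (n+1) * n.choose r := (Nat.add_one_mul_choose_eq n r).symm

noncomputable def tT (x y : ℝ) (m n r : ℕ) : ℝ :=
  (m.choose r : ℝ) * ((n+2).choose r : ℝ) * (r.factorial : ℝ) * (2*y)^r
    * hermite2 (m-r) x y * hermite2 (n+2-r) x y
noncomputable def tA (x y : ℝ) (m n r : ℕ) : ℝ :=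
  (m.choose r : ℝ) * ((n+2).choose r : ℝ) * (r.factorial : ℝ) * (2*y)^r
    * hermite2 (m-r) x y * hermite2 (n+1-r) x y
noncomputable def tB (x y : ℝ) (m n r : ℕ) : ℝ :=
  (m.choose r : ℝ) * ((n+2).choose r : ℝ) * (r.factorial : ℝ) * (2*y)^r * (2*y)
    * ((n+1-r : ℕ) : ℝ) * hermite2 (m-r) x y * hermite2 (n-r) x y
noncomputable def tA1 (x y : ℝ) (m n r : ℕ) : ℝ :=
  (m.choose r : ℝ) * ((n+1).choose r : ℝ) * (r.factorial : ℝ) * (2*y)^r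
    * hermite2 (m-r) x y * hermite2 (n+1-r) x y
noncomputable def tA2 (x y : ℝ) (m n s : ℕ) : ℝ :=
  (m.choose (s+1) : ℝ) * ((n+1).choose s : ℝ) * ((s+1).factorial : ℝ) * (2*y)^(s+1)
    * hermite2 (m-(s+1)) x y * hermite2 (n-s) x y
noncomputable def tB1 (x y : ℝ) (m n r : ℕ) : ℝ :=
  (m.choose r : ℝ) * ((n+1).choose r : ℝ) * (r.factorial : ℝ) * (2*y)^r * (2*y)
    * ((n+1-r : ℕ) : ℝ) * hermite2 (m-r) x y * hermite2 (n-r) x y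
noncomputable def tB2 (x y : ℝ) (m n s : ℕ) : ℝ :=
  (m.choose (s+1) : ℝ) * ((n+1).choose s : ℝ) * ((s+1).factorial : ℝ) * (2*y)^(s+1) * (2*y)
    * ((n-s : ℕ) : ℝ) * hermite2 (m-(s+1)) x y * hermite2 (n-(s+1)) x y
noncomputable def tW (x y : ℝ) (m n r : ℕ) : ℝ :=
  2*y*(m:ℝ) * (((m-1).choose r : ℝ) * ((n+1).choose r : ℝ) * (r.factorial : ℝ) * (2*y)^r
    * hermite2 (m-1-r) x y * hermite2 (n+1-r) x y)
noncomputable def tW1 (x y : ℝ) (m n r : ℕ) : ℝ :=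
  2*y*(m:ℝ) * (((m-1).choose r : ℝ) * ((n+1).choose r : ℝ) * (r.factorial : ℝ) * (2*y)^r
    * hermite2 (m-1-r) x y * hermite2 (n-r) x y)
noncomputable def tW2 (x y : ℝ) (m n r : ℕ) : ℝ :=
  2*y*(m:ℝ) * (((m-1).choose r : ℝ) * ((n+1).choose r : ℝ) * (r.factorial : ℝ) * (2*y)^r * (2*y)
    * ((n-r : ℕ) : ℝ) * hermite2 (m-1-r) x y * hermite2 (n-r-1) x y)

lemma FF_rec (x y : ℝ) (m n : ℕ) :
    FF x y m (n+2) = x * FF x y m (n+1) + 2*y*((n:ℝ)+1)*FF x y m n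
      + 2*y*(m:ℝ)*FF x y (m-1) (n+1) := by
  have h1 : FF x y m (n+2) = ∑ r ∈ range (n+2), tT x y m n r + tT x y m n (n+2) := by
    simp only [FF, tT]
    exact Finset.sum_range_succ _ _
  have h2 : ∑ r ∈ range (n+2), tT x y m n r
      = x * ∑ r ∈ range (n+2), tA x y m n r + ∑ r ∈ range (n+2), tB x y m n r := by
    rw [Finset.mul_sum, ← Finset.sum_add_distrib]
    apply Finset.sum_congr rfl
    intro r hr
    simp only [Finset.mem_range] at hr
    simp only [tT, tA, tB]
    rw [show n+2-r = (n+1-r)+1 from by omega, hermite2_rec1 x y (n+1-r),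
        show n+1-r-1 = n-r from by omega]
    ring
  have h3 : ∑ r ∈ range (n+2), tA x y m n r
      = FF x y m (n+1) + ∑ s ∈ range (n+1), tA2 x y m n s := by
    have e1 : ∑ r ∈ range (n+2), tA x y m n r
        = ∑ s ∈ range (n+1), tA x y m n (s+1) + tA x y m n 0 := Finset.sum_range_succ' _ _
    have e2 : FF x y m (n+1)
        = ∑ s ∈ range (n+1), tA1 x y m n (s+1) + tA1 x y m n 0 := by
      simp only [FF, tA1]
      exact Finset.sum_range_succ' _ _
    have e3 : ∀ s ∈ range (n+1), tA x y m n (s+1) = tA1 x y m n (s+1) + tA2 x y m n s := by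
      intro s hs
      simp only [tA, tA1, tA2]
      have hp : (n+2).choose (s+1) = (n+1).choose s + (n+1).choose (s+1) := by
        rw [show n+2 = (n+1)+1 from by omega]
        exact Nat.choose_succ_succ' (n+1) s
      rw [hp, show n+1-(s+1) = n-s from by omega]
      push_cast
      ring
    rw [e1, Finset.sum_congr rfl e3, Finset.sum_add_distrib, e2,
        show tA x y m n 0 = tA1 x y m n 0 from by simp [tA, tA1]]
    ring
  have h4 : ∑ r ∈ range (n+2), tB x y m n r = ∑ r ∈ range (n+1), tB x y m n r := by
    rw [Finset.sum_range_succ]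
    simp [tB]
  have h5 : ∑ r ∈ range (n+1), tB x y m n r
      = ∑ r ∈ range (n+1), tB1 x y m n r + ∑ s ∈ range n, tB2 x y m n s := by
    have e1 : ∑ r ∈ range (n+1), tB x y m n r
        = ∑ s ∈ range n, tB x y m n (s+1) + tB x y m n 0 := Finset.sum_range_succ' _ _
    have e2 : ∑ r ∈ range (n+1), tB1 x y m n r
        = ∑ s ∈ range n, tB1 x y m n (s+1) + tB1 x y m n 0 := Finset.sum_range_succ' _ _
    have e3 : ∀ s ∈ range n, tB x y m n (s+1) = tB1 x y m n (s+1) + tB2 x y m n s := by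
      intro s hs
      simp only [tB, tB1, tB2]
      have hp : (n+2).choose (s+1) = (n+1).choose s + (n+1).choose (s+1) := by
        rw [show n+2 = (n+1)+1 from by omega]
        exact Nat.choose_succ_succ' (n+1) s
      rw [hp, show n+1-(s+1) = n-s from by omega]
      push_cast
      ring
    rw [e1, Finset.sum_congr rfl e3, Finset.sum_add_distrib, e2,
        show tB x y m n 0 = tB1 x y m n 0 from by simp [tB, tB1]]
    ring
  have h6 : ∑ r ∈ range (n+1), tB1 x y m n r = 2*y*((n:ℝ)+1) * FF x y m n := by
    simp only [FF]
    rw [Finset.mul_sum]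
    apply Finset.sum_congr rfl
    intro r hr
    simp only [Finset.mem_range] at hr
    simp only [tB1]
    have hc : (((n+1-r : ℕ)) : ℝ) * ((n+1).choose r : ℝ) = ((n:ℝ)+1) * (n.choose r : ℝ) := by
      exact_mod_cast congrArg (Nat.cast (R := ℝ)) (idN3 n r)
    linear_combination ((m.choose r : ℝ) * (r.factorial : ℝ) * (2*y)^r * (2*y)
      * hermite2 (m-r) x y * hermite2 (n-r) x y) * hc
  have h7 : 2*y*(m:ℝ)*FF x y (m-1) (n+1)
      = ∑ r ∈ range (n+1), tW x y m n r + tW x y m n (n+1) := by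
    simp only [FF, tW]
    rw [Finset.mul_sum]
    exact Finset.sum_range_succ _ _
  have h8 : tW x y m n (n+1) = tT x y m n (n+2) := by
    simp only [tW, tT]
    rw [Nat.choose_self, Nat.choose_self,
        show n+1-(n+1) = 0 from by omega, show n+2-(n+2) = 0 from by omega,
        show m-1-(n+1) = m-(n+2) from by omega,
        show (n+2).factorial = (n+2)*(n+1).factorial from by
          rw [show n+2 = (n+1)+1 from by omega]; rfl]
    have hc : ((n:ℝ)+2) * (m.choose (n+2) : ℝ) = (m:ℝ) * ((m-1).choose (n+1) : ℝ) := by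
      have := idN2 m (n+1)
      rw [show n+1+1 = n+2 from by omega] at this
      exact_mod_cast congrArg (Nat.cast (R := ℝ)) this
    rw [show (2*y)^(n+2) = (2*y)^(n+1)*(2*y) from by rw [pow_succ]]
    push_cast
    linear_combination (-(((n+1).factorial : ℝ) * (2*y)^(n+1) * (2*y)
      * hermite2 (m-(n+2)) x y * hermite2 0 x y)) * hc
  have h9 : ∑ r ∈ range (n+1), tW x y m n r
      = x * ∑ r ∈ range (n+1), tW1 x y m n r + ∑ r ∈ range (n+1), tW2 x y m n r := by
    rw [Finset.mul_sum, ← Finset.sum_add_distrib]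
    apply Finset.sum_congr rfl
    intro r hr
    simp only [Finset.mem_range] at hr
    simp only [tW, tW1, tW2]
    rw [show n+1-r = (n-r)+1 from by omega, hermite2_rec1 x y (n-r)]
    ring
  have h10 : ∑ s ∈ range (n+1), tA2 x y m n s = ∑ s ∈ range (n+1), tW1 x y m n s := by
    apply Finset.sum_congr rfl
    intro s hs
    simp only [tA2, tW1]
    have hc : ((s:ℝ)+1) * (m.choose (s+1) : ℝ) = (m:ℝ) * ((m-1).choose s : ℝ) := by
      exact_mod_cast congrArg (Nat.cast (R := ℝ)) (idN2 m s)
    rw [show (s+1).factorial = (s+1)*s.factorial from rfl,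
        show (2*y)^(s+1) = (2*y)^s*(2*y) from by rw [pow_succ],
        show m-(s+1) = m-1-s from by omega]
    push_cast
    linear_combination ((s.factorial : ℝ) * ((n+1).choose s : ℝ) * (2*y)^s * (2*y)
      * hermite2 (m-1-s) x y * hermite2 (n-s) x y) * hc
  have h11 : ∑ r ∈ range (n+1), tW2 x y m n r = ∑ s ∈ range n, tB2 x y m n s := by
    rw [Finset.sum_range_succ, show tW2 x y m n n = 0 from by simp [tW2]]
    rw [add_zero]
    apply Finset.sum_congr rfl
    intro s hs
    simp only [tW2, tB2]
    have hc : ((s:ℝ)+1) * (m.choose (s+1) : ℝ) = (m:ℝ) * ((m-1).choose s : ℝ) := by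
      exact_mod_cast congrArg (Nat.cast (R := ℝ)) (idN2 m s)
    rw [show (s+1).factorial = (s+1)*s.factorial from rfl,
        show (2*y)^(s+1) = (2*y)^s*(2*y) from by rw [pow_succ],
        show m-(s+1) = m-1-s from by omega,
        show n-(s+1) = n-s-1 from by omega]
    push_cast
    linear_combination (-((s.factorial : ℝ) * ((n+1).choose s : ℝ) * (2*y)^s * (2*y) * (2*y)
      * ((n-s : ℕ) : ℝ) * hermite2 (m-1-s) x y * hermite2 (n-s-1) x y)) * hc
  linear_combination h1 + h2 + x*h3 + h4 + h5 + h6 - h7 - h8 - h9 + x*h10 - h11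

lemma FF_zero (x y : ℝ) (m : ℕ) : FF x y m 0 = hermite2 m x y := by
  simp [FF, hermite2_zero]

lemma FF_one (x y : ℝ) (m : ℕ) : FF x y m 1 = hermite2 (m+1) x y := by
  rw [hermite2_rec1 x y m]
  simp [FF, Finset.sum_range_succ, hermite2_zero, hermite2_one]
  ring

lemma FF_eq (x y : ℝ) : ∀ N m n, m + n = N → FF x y m n = hermite2 N x y := by
  intro N
  induction N using Nat.strong_induction_on with
  | _ N ih =>
    intro m n hmn
    match n with
    | 0 => simpa [← hmn] using FF_zero x y m
    | 1 => simpa [← hmn] using FF_one x y m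
    | (n'+2) =>
      rw [FF_rec x y m n']
      rw [ih (m+(n'+1)) (by omega) m (n'+1) rfl,
          ih (m+n') (by omega) m n' rfl]
      have hlast : 2*y*(m:ℝ)*FF x y (m-1) (n'+1) = 2*y*(m:ℝ)*hermite2 (m+n') x y := by
        cases m with
        | zero => simp
        | succ m' =>
          rw [Nat.add_sub_cancel, ih (m'+(n'+1)) (by omega) m' (n'+1) rfl,
              show m'+(n'+1) = m'+1+n' from by omega]
      rw [hlast, ← hmn]
      have hr := hermite2_rec1 x y (m+n'+1)
      rw [show m+n'+1+1 = m+(n'+2) from by omega] at hr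
      rw [show m+n'+1-1 = m+n' from by omega] at hr
      rw [hr]
      push_cast
      ring_nf

/-- the index-duplication formula
`H_{2n}(x,y) = ∑_{r=0}^{n} C(n,r)² r! (2y)^r (H_{n-r}(x,y))²`. -/
theorem hermite2_duplication (n : ℕ) (x y : ℝ) :
    hermite2 (2 * n) x y =
      ∑ r ∈ range (n + 1),
        ((n.choose r : ℝ)) ^ 2 * (r.factorial : ℝ) * (2 * y) ^ r *
          (hermite2 (n - r) x y) ^ 2 := by
  have h := FF_eq x y (n+n) n n rfl
  rw [show 2*n = n+n from by omega, ← h, FF]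
  apply Finset.sum_congr rfl
  intro r hr
  ring
end

section
/- For every integer n ≥ 0, the even-index Motzkin numbers satisfy m_{2n} = ∑_{r=0}^{n} binomial(n,r)² · 2^r · r! · (n-r)! · ∑_{s=0}^{⌊(n-r)/2⌋} m_{n-r}^{(r+s+1)} / ((n-r-2s)!·s!), where the identity holds in the rational numbers. -/
open Finset

/-- The associated Motzkin numbers
`m_n^{(q)} = n! ∑_{r=0}^{⌊n/2⌋} 1/((n-2r)!·r!·(r+q)!)`, as rational numbers. -/
noncomputable def motzkinAssoc (q n : ℕ) : ℚ :=
  (n.factorial : ℚ) * ∑ r ∈ range (n / 2 + 1),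
    1 / (((n - 2 * r).factorial : ℚ) * (r.factorial : ℚ) * ((r + q).factorial : ℚ))

/-- The Motzkin numbers `m_n = m_n^{(1)}`. -/
noncomputable def motzkin (n : ℕ) : ℚ := motzkinAssoc 1 n

open Polynomial in
lemma lemA (n k : ℕ) (hk : k ≤ n) :
    ∑ s ∈ range (k+1), ∑ r ∈ range (k - s + 1),
      (k.choose s : ℚ) * ((k-s).choose r : ℚ) * 2^r *
        (if 2*s + r ≤ n then (((2*n-2*k).choose (n - (2*s+r)) : ℕ) : ℚ) else 0)
    = ((2*n).choose n : ℚ) := by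
  have h0 : ((X + 1 : ℚ[X]) ^ (2*n)).coeff n = ((2*n).choose n : ℚ) := by
    simp [coeff_X_add_one_pow]
  have h1 : (X + 1 : ℚ[X]) ^ (2*n) = ((X^2 + (2*X+1))^k) * (X+1)^(2*n-2*k) := by
    have h : (X^2 + (2*X+1) : ℚ[X]) = (X+1)^2 := by ring
    rw [h, ← pow_mul, ← pow_add]
    congr 1; omega
  have h2 : ((X^2 + (2*X+1) : ℚ[X]))^k
      = ∑ s ∈ range (k+1), ∑ r ∈ range (k-s+1),
          Polynomial.C ((k.choose s : ℚ) * ((k-s).choose r) * 2^r) * X^(2*s+r) := by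
    rw [add_pow]
    refine sum_congr rfl fun s hs => ?_
    rw [add_pow, Finset.mul_sum, Finset.sum_mul]
    refine sum_congr rfl fun r hr => ?_
    rw [one_pow, mul_one, mul_pow]
    rw [C_mul, C_mul, C_pow]
    simp only [C_eq_natCast, map_ofNat]
    ring
  rw [← h0, h1, h2, Finset.sum_mul, finset_sum_coeff]
  refine sum_congr rfl fun s hs => ?_
  rw [Finset.sum_mul, finset_sum_coeff]
  refine sum_congr rfl fun r hr => ?_
  conv_rhs => rw [mul_right_comm]
  rw [coeff_mul_X_pow', coeff_C_mul, coeff_X_add_one_pow]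
  split_ifs <;> ring

lemma lemB (n k : ℕ) (hk : k ≤ n) :
    ∑ r ∈ range (n+1), ∑ s ∈ range ((n-r)/2+1), ∑ t ∈ range ((n-r)/2+1),
      (if r + s + t = k then
        ((n.factorial : ℚ))^2 * 2^r /
          ((r.factorial : ℚ) * s.factorial * t.factorial *
           (n-r-2*s).factorial * (n-r-2*t).factorial)
       else 0)
    = ((2*n).factorial : ℚ) / (((2*n-2*k).factorial : ℚ) * k.factorial) := by
  -- abbreviation for the summand numerator expression
  set F : ℕ → ℕ → ℕ → ℚ := fun r s t =>
    ((n.factorial : ℚ))^2 * 2^r /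
      ((r.factorial : ℚ) * s.factorial * t.factorial *
       (n-r-2*s).factorial * (n-r-2*t).factorial) with hF
  -- Step 1: collapse the t-sum
  have stepT : ∀ r s : ℕ,
      (∑ t ∈ range ((n-r)/2+1), if r + s + t = k then F r s t else 0)
      = if r + s ≤ k ∧ k - (r+s) ≤ (n-r)/2 then F r s (k - (r+s)) else 0 := by
    intro r s
    have e1 : ∀ t ∈ range ((n-r)/2+1),
        (if r + s + t = k then F r s t else 0)
        = if t = k - (r+s) then (if r + s ≤ k then F r s t else 0) else 0 := by
      intro t ht
      split_ifs with h1 h2 h3 <;> first | rfl | omega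
    rw [Finset.sum_congr rfl e1, Finset.sum_ite_eq' (range ((n-r)/2+1)) (k - (r+s))]
    simp only [Finset.mem_range]
    split_ifs <;> first | rfl | (exfalso; omega)
  -- Step 2: extend the s-range to range (n+1)
  have stepS : ∀ r : ℕ,
      (∑ s ∈ range ((n-r)/2+1),
        if r + s ≤ k ∧ k - (r+s) ≤ (n-r)/2 then F r s (k - (r+s)) else 0)
      = ∑ s ∈ range (n+1),
        if 2*s ≤ n - r ∧ r + s ≤ k ∧ k - (r+s) ≤ (n-r)/2 then F r s (k - (r+s)) else 0 := by
    intro r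
    calc (∑ s ∈ range ((n-r)/2+1),
            if r + s ≤ k ∧ k - (r+s) ≤ (n-r)/2 then F r s (k - (r+s)) else 0)
        = ∑ s ∈ range ((n-r)/2+1),
            (if 2*s ≤ n - r ∧ r + s ≤ k ∧ k - (r+s) ≤ (n-r)/2 then F r s (k - (r+s)) else 0) := by
          refine Finset.sum_congr rfl fun s hs => ?_
          simp only [Finset.mem_range] at hs
          split_ifs <;> first | rfl | (exfalso; omega)
      _ = ∑ s ∈ range (n+1),
            (if 2*s ≤ n - r ∧ r + s ≤ k ∧ k - (r+s) ≤ (n-r)/2 then F r s (k - (r+s)) else 0) := by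
          refine Finset.sum_subset (Finset.range_subset_range.2 (by omega : (n-r)/2+1 ≤ n+1)) ?_
          intro s hs hns
          simp only [Finset.mem_range] at hs hns
          split_ifs with h <;> first | rfl | (exfalso; omega)
  change ∑ r ∈ range (n+1), ∑ s ∈ range ((n-r)/2+1), ∑ t ∈ range ((n-r)/2+1),
    (if r + s + t = k then F r s t else 0) = _
  simp only [stepT, stepS]
  rw [Finset.sum_comm]
  -- Right-hand side via lemA
  have hA := lemA n k hk
  have hcast : (((2*n).choose n : ℕ) : ℚ)
      = ((2*n).factorial : ℚ) / ((n.factorial : ℚ) * (n.factorial : ℚ)) := by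
    rw [Nat.cast_choose ℚ (by omega : n ≤ 2*n), show 2*n-n = n from by omega]
  have fact_ne : ∀ m : ℕ, (m.factorial : ℚ) ≠ 0 :=
    fun m => Nat.cast_ne_zero.2 (Nat.factorial_ne_zero m)
  have hext : (∑ s ∈ range (n+1), ∑ r ∈ range (n+1),
      (k.choose s : ℚ) * ((k-s).choose r : ℚ) * 2^r *
        (if 2*s + r ≤ n then (((2*n-2*k).choose (n - (2*s+r)) : ℕ) : ℚ) else 0))
      = ((2*n).choose n : ℚ) := by
    calc (∑ s ∈ range (n+1), ∑ r ∈ range (n+1),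
            (k.choose s : ℚ) * ((k-s).choose r : ℚ) * 2^r *
              (if 2*s + r ≤ n then (((2*n-2*k).choose (n - (2*s+r)) : ℕ) : ℚ) else 0))
        = ∑ s ∈ range (k+1), ∑ r ∈ range (n+1),
            (k.choose s : ℚ) * ((k-s).choose r : ℚ) * 2^r *
              (if 2*s + r ≤ n then (((2*n-2*k).choose (n - (2*s+r)) : ℕ) : ℚ) else 0) := by
          refine (Finset.sum_subset (Finset.range_subset_range.2 (by omega : k+1 ≤ n+1)) ?_).symm
          intro s hs hns
          simp only [Finset.mem_range] at hs hns
          refine Finset.sum_eq_zero fun r hr => ?_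
          rw [Nat.choose_eq_zero_of_lt (by omega : k < s)]
          simp
      _ = ∑ s ∈ range (k+1), ∑ r ∈ range (k-s+1),
            (k.choose s : ℚ) * ((k-s).choose r : ℚ) * 2^r *
              (if 2*s + r ≤ n then (((2*n-2*k).choose (n - (2*s+r)) : ℕ) : ℚ) else 0) := by
          refine Finset.sum_congr rfl fun s hs => ?_
          refine (Finset.sum_subset (Finset.range_subset_range.2 (by omega : k-s+1 ≤ n+1)) ?_).symm
          intro r hr hnr
          simp only [Finset.mem_range] at hr hnr
          rw [Nat.choose_eq_zero_of_lt (by omega : k - s < r)]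
          simp
      _ = ((2*n).choose n : ℚ) := hA
  have key : ((2*n).factorial : ℚ) / (((2*n-2*k).factorial : ℚ) * k.factorial)
      = ∑ s ∈ range (n+1), ∑ r ∈ range (n+1),
          (n.factorial:ℚ)^2 / ((k.factorial : ℚ) * (2*n-2*k).factorial) *
          ((k.choose s : ℚ) * ((k-s).choose r : ℚ) * 2^r *
            (if 2*s + r ≤ n then (((2*n-2*k).choose (n - (2*s+r)) : ℕ) : ℚ) else 0)) := by
    have : ∀ s ∈ range (n+1), ∑ r ∈ range (n+1),
          (n.factorial:ℚ)^2 / ((k.factorial : ℚ) * (2*n-2*k).factorial) *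
          ((k.choose s : ℚ) * ((k-s).choose r : ℚ) * 2^r *
            (if 2*s + r ≤ n then (((2*n-2*k).choose (n - (2*s+r)) : ℕ) : ℚ) else 0))
        = (n.factorial:ℚ)^2 / ((k.factorial : ℚ) * (2*n-2*k).factorial) *
          ∑ r ∈ range (n+1),
          ((k.choose s : ℚ) * ((k-s).choose r : ℚ) * 2^r *
            (if 2*s + r ≤ n then (((2*n-2*k).choose (n - (2*s+r)) : ℕ) : ℚ) else 0)) := by
      intro s _
      rw [Finset.mul_sum]
    rw [Finset.sum_congr rfl this, ← Finset.mul_sum, hext, hcast]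
    field_simp
  rw [key]
  refine Finset.sum_congr rfl fun s hs => Finset.sum_congr rfl fun r hr => ?_
  simp only [Finset.mem_range] at hs hr
  by_cases hC : 2*s ≤ n - r ∧ r + s ≤ k ∧ k - (r+s) ≤ (n-r)/2
  · rw [if_pos hC]
    obtain ⟨h1, h2, h3⟩ := hC
    have h4 : 2*s + r ≤ n := by omega
    rw [if_pos h4]
    have hsk : s ≤ k := by omega
    have hrk : r ≤ k - s := by omega
    have hnk : n - (2*s+r) ≤ 2*n-2*k := by omega
    rw [Nat.cast_choose ℚ hsk, Nat.cast_choose ℚ hrk, Nat.cast_choose ℚ hnk]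
    rw [show k - s - r = k - (r+s) from by omega,
        show n - (2*s+r) = n - r - 2*s from by omega,
        show 2*n-2*k - (n - r - 2*s) = n - r - 2*(k-(r+s)) from by omega]
    simp only [hF]
    field_simp
  · rw [if_neg hC]
    by_cases hx : 2*s + r ≤ n
    · by_cases hsk : s ≤ k
      · by_cases hrk : r ≤ k - s
        · have hz : (2*n-2*k) < (n - (2*s+r)) := by omega
          rw [Nat.choose_eq_zero_of_lt hz]
          simp
        · rw [Nat.choose_eq_zero_of_lt (by omega : k - s < r)]
          simp
      · rw [Nat.choose_eq_zero_of_lt (by omega : k < s)]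
        simp
    · rw [if_neg hx]
      simp


/-- the even-index Motzkin numbers satisfy
`m_{2n} = ∑_{r=0}^{n} C(n,r)² 2^r r! (n-r)! ∑_{s=0}^{⌊(n-r)/2⌋}
m_{n-r}^{(r+s+1)} / ((n-r-2s)!·s!)`. -/
theorem motzkin_even_duplication (n : ℕ) :
    motzkin (2 * n) =
      ∑ r ∈ range (n + 1),
        ((n.choose r : ℚ)) ^ 2 * 2 ^ r * (r.factorial : ℚ) * ((n - r).factorial : ℚ) *
          ∑ s ∈ range ((n - r) / 2 + 1),
            motzkinAssoc (r + s + 1) (n - r) /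
              (((n - r - 2 * s).factorial : ℚ) * (s.factorial : ℚ)) := by
  have fact_ne : ∀ m : ℕ, (m.factorial : ℚ) ≠ 0 :=
    fun m => Nat.cast_ne_zero.2 (Nat.factorial_ne_zero m)
  set G : ℕ → ℕ → ℕ → ℚ := fun r s t =>
    ((n.factorial : ℚ))^2 * 2^r /
      ((r.factorial : ℚ) * s.factorial * t.factorial *
       (n-r-2*s).factorial * (n-r-2*t).factorial) with hG
  have step2 : (∑ r ∈ range (n + 1),
        ((n.choose r : ℚ)) ^ 2 * 2 ^ r * (r.factorial : ℚ) * ((n - r).factorial : ℚ) *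
          ∑ s ∈ range ((n - r) / 2 + 1),
            motzkinAssoc (r + s + 1) (n - r) /
              (((n - r - 2 * s).factorial : ℚ) * (s.factorial : ℚ)))
      = ∑ r ∈ range (n+1), ∑ s ∈ range ((n-r)/2+1), ∑ t ∈ range ((n-r)/2+1),
          G r s t * (1 / ((r+s+t+1).factorial : ℚ)) := by
    refine Finset.sum_congr rfl fun r hr => ?_
    simp only [Finset.mem_range] at hr
    have hrn : r ≤ n := by omega
    rw [Nat.cast_choose ℚ hrn]
    simp only [motzkinAssoc]
    rw [Finset.mul_sum]
    refine Finset.sum_congr rfl fun s hs => ?_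
    rw [Finset.mul_sum, Finset.sum_div, Finset.mul_sum]
    refine Finset.sum_congr rfl fun t ht => ?_
    rw [show t + (r + s + 1) = r+s+t+1 from by omega]
    simp only [hG]
    field_simp
  have step3 : ∀ r ∈ range (n+1), ∀ s ∈ range ((n-r)/2+1), ∀ t ∈ range ((n-r)/2+1),
      G r s t * (1 / ((r+s+t+1).factorial : ℚ))
      = ∑ k ∈ range (n+1),
          (if r + s + t = k then G r s t else 0) * (1 / ((k+1).factorial : ℚ)) := by
    intro r hr s hs t ht
    simp only [Finset.mem_range] at hr hs ht
    have hm : r + s + t ∈ range (n+1) := by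
      simp only [Finset.mem_range]; omega
    have e : ∀ k : ℕ, (if r+s+t = k then G r s t else 0) * (1 / ((k+1).factorial : ℚ))
        = (if r+s+t = k then G r s t * (1 / ((k+1).factorial : ℚ)) else 0) := by
      intro k; split_ifs <;> simp
    simp only [e]
    rw [Finset.sum_ite_eq (range (n+1)) (r+s+t)
        (fun k => G r s t * (1 / ((k+1).factorial : ℚ))), if_pos hm]
  have swap : (∑ r ∈ range (n+1), ∑ s ∈ range ((n-r)/2+1), ∑ t ∈ range ((n-r)/2+1),
        ∑ k ∈ range (n+1), (if r + s + t = k then G r s t else 0) * (1 / ((k+1).factorial : ℚ)))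
      = ∑ k ∈ range (n+1), ∑ r ∈ range (n+1), ∑ s ∈ range ((n-r)/2+1),
          ∑ t ∈ range ((n-r)/2+1),
          (if r + s + t = k then G r s t else 0) * (1 / ((k+1).factorial : ℚ)) := by
    calc (∑ r ∈ range (n+1), ∑ s ∈ range ((n-r)/2+1), ∑ t ∈ range ((n-r)/2+1),
            ∑ k ∈ range (n+1), (if r + s + t = k then G r s t else 0) * (1 / ((k+1).factorial : ℚ)))
        = ∑ r ∈ range (n+1), ∑ s ∈ range ((n-r)/2+1), ∑ k ∈ range (n+1),
            ∑ t ∈ range ((n-r)/2+1),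
            (if r + s + t = k then G r s t else 0) * (1 / ((k+1).factorial : ℚ)) :=
          Finset.sum_congr rfl fun r _ => Finset.sum_congr rfl fun s _ => Finset.sum_comm
      _ = ∑ r ∈ range (n+1), ∑ k ∈ range (n+1), ∑ s ∈ range ((n-r)/2+1),
            ∑ t ∈ range ((n-r)/2+1),
            (if r + s + t = k then G r s t else 0) * (1 / ((k+1).factorial : ℚ)) :=
          Finset.sum_congr rfl fun r _ => Finset.sum_comm
      _ = ∑ k ∈ range (n+1), ∑ r ∈ range (n+1), ∑ s ∈ range ((n-r)/2+1),
            ∑ t ∈ range ((n-r)/2+1),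
            (if r + s + t = k then G r s t else 0) * (1 / ((k+1).factorial : ℚ)) :=
          Finset.sum_comm
  have step5 : ∀ k ∈ range (n+1),
      (∑ r ∈ range (n+1), ∑ s ∈ range ((n-r)/2+1), ∑ t ∈ range ((n-r)/2+1),
        (if r + s + t = k then G r s t else 0) * (1 / ((k+1).factorial : ℚ)))
      = (((2*n).factorial : ℚ) / (((2*n-2*k).factorial : ℚ) * k.factorial))
          * (1 / ((k+1).factorial : ℚ)) := by
    intro k hk'
    simp only [Finset.mem_range] at hk'
    simp only [← Finset.sum_mul]
    rw [lemB n k (by omega)]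
  rw [step2,
    Finset.sum_congr rfl (fun r hr => Finset.sum_congr rfl (fun s hs =>
      Finset.sum_congr rfl (fun t ht => step3 r hr s hs t ht))),
    swap, Finset.sum_congr rfl step5]
  simp only [motzkin, motzkinAssoc]
  rw [show 2*n/2 = n from by omega, Finset.mul_sum]
  refine Finset.sum_congr rfl fun k hk' => ?_
  field_simp
end

section
/- For all integers n ≥ 1 and q ≥ 0, the associated Motzkin numbers satisfy the recurrence m_{n+1}^{(q)} = m_n^{(q)} + 2·n·m_{n-1}^{(q+1)} (an identity among rational numbers). -/
open Finset

lemma term_split (N r q : ℕ) (h : 2*r ≤ N+1) :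
    ((N+2).factorial : ℚ) * (1/(((N+2-2*r).factorial:ℚ) * (r.factorial:ℚ) * ((r+q).factorial:ℚ)))
    = ((N+1).factorial:ℚ) * (1/(((N+1-2*r).factorial:ℚ)*(r.factorial:ℚ)*((r+q).factorial:ℚ)))
      + 2*(r:ℚ)*((N+1).factorial:ℚ) /
        (((N+2-2*r).factorial:ℚ)*(r.factorial:ℚ)*((r+q).factorial:ℚ)) := by
  have e1 : N+2-2*r = (N+1-2*r)+1 := by omega
  have e2 : ((N+1-2*r : ℕ) : ℚ) = (N:ℚ)+1-2*(r:ℚ) := by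
    have := (Nat.cast_sub h : (((N+1-2*r : ℕ)) : ℚ) = ((N+1 : ℕ):ℚ) - ((2*r : ℕ):ℚ))
    push_cast at this ⊢
    linarith [this]
  rw [e1, show (N+1-2*r+1).factorial = (N+1-2*r+1) * (N+1-2*r).factorial from Nat.factorial_succ _,
    show (N+2).factorial = (N+2) * (N+1).factorial from Nat.factorial_succ _]
  push_cast
  rw [e2]
  have hz : ((N:ℚ)+1-2*(r:ℚ)+1) ≠ 0 := by
    rw [← e2]
    positivity
  field_simp
  ring

lemma term_shift (N s q : ℕ) (h : 2*s ≤ N) :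
    2*((s+1:ℕ):ℚ)*((N+1).factorial:ℚ) /
      (((N+2-2*(s+1)).factorial:ℚ)*((s+1).factorial:ℚ)*(((s+1)+q).factorial:ℚ))
    = 2*((N+1:ℕ):ℚ)*((N.factorial):ℚ) *
      (1/(((N-2*s).factorial:ℚ)*(s.factorial:ℚ)*((s+(q+1)).factorial:ℚ))) := by
  have e1 : N+2-2*(s+1) = N-2*s := by omega
  have e2 : (s+1)+q = s+(q+1) := by omega
  rw [e1, e2, show (s+1).factorial = (s+1) * s.factorial from Nat.factorial_succ _,
    show (N+1).factorial = (N+1) * N.factorial from Nat.factorial_succ _]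
  push_cast
  have hs : ((s:ℚ)+1) ≠ 0 := by positivity
  field_simp

lemma boundary (k q : ℕ) :
    ((2*k+2).factorial:ℚ) *
      (1/(((2*k+2-2*(k+1)).factorial:ℚ)*((k+1).factorial:ℚ)*(((k+1)+q).factorial:ℚ)))
    = 2*((2*k+1:ℕ):ℚ)*(((2*k).factorial):ℚ) *
      (1/(((2*k-2*k).factorial:ℚ)*(k.factorial:ℚ)*((k+(q+1)).factorial:ℚ))) := by
  have e1 : 2*k+2-2*(k+1) = 0 := by omega
  have e2 : 2*k-2*k = 0 := by omega
  have e3 : (k+1)+q = k+(q+1) := by omega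
  rw [e1, e2, e3, show (k+1).factorial = (k+1) * k.factorial from Nat.factorial_succ _,
    show (2*k+2).factorial = (2*k+2) * ((2*k+1) * (2*k).factorial) from by
      rw [Nat.factorial_succ, Nat.factorial_succ]]
  simp only [Nat.factorial_zero]
  push_cast
  have hk : ((k:ℚ)+1) ≠ 0 := by positivity
  field_simp

lemma case_odd (k q : ℕ) :
    motzkinAssoc q (2*k+2)
      = motzkinAssoc q (2*k+1) + 2*((2*k+1:ℕ):ℚ) * motzkinAssoc (q+1) (2*k) := by
  unfold motzkinAssoc
  have d1 : (2*k+2)/2 + 1 = k+2 := by omega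
  have d2 : (2*k+1)/2 + 1 = k+1 := by omega
  have d3 : (2*k)/2 + 1 = k+1 := by omega
  rw [d1, d2, d3, Finset.mul_sum, Finset.mul_sum, Finset.mul_sum, Finset.mul_sum,
    Finset.sum_range_succ]
  have e_main : ∑ r ∈ range (k+1),
      ((2*k+2).factorial:ℚ) * (1/(((2*k+2-2*r).factorial:ℚ)*(r.factorial:ℚ)*((r+q).factorial:ℚ)))
    = ∑ r ∈ range (k+1),
      (((2*k+1).factorial:ℚ) * (1/(((2*k+1-2*r).factorial:ℚ)*(r.factorial:ℚ)*((r+q).factorial:ℚ)))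
        + 2*(r:ℚ)*((2*k+1).factorial:ℚ) /
          (((2*k+2-2*r).factorial:ℚ)*(r.factorial:ℚ)*((r+q).factorial:ℚ))) := by
    refine Finset.sum_congr rfl fun r hr => ?_
    have : r < k+1 := Finset.mem_range.mp hr
    exact term_split (2*k) r q (by omega)
  rw [Finset.sum_add_distrib] at e_main
  have e_h : (∑ r ∈ range (k+1), 2*(r:ℚ)*((2*k+1).factorial:ℚ) /
        (((2*k+2-2*r).factorial:ℚ)*(r.factorial:ℚ)*((r+q).factorial:ℚ)))
      + ((2*k+2).factorial:ℚ) *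
        (1/(((2*k+2-2*(k+1)).factorial:ℚ)*((k+1).factorial:ℚ)*(((k+1)+q).factorial:ℚ)))
    = ∑ s ∈ range (k+1), 2*((2*k+1:ℕ):ℚ)*(((2*k).factorial):ℚ) *
        (1/(((2*k-2*s).factorial:ℚ)*(s.factorial:ℚ)*((s+(q+1)).factorial:ℚ))) := by
    rw [Finset.sum_range_succ' _ k, Finset.sum_range_succ]
    have h0 : 2*((0:ℕ):ℚ)*((2*k+1).factorial:ℚ) /
        (((2*k+2-2*0).factorial:ℚ)*((0:ℕ).factorial:ℚ)*(((0:ℕ)+q).factorial:ℚ)) = 0 := by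
      norm_num
    rw [h0]
    have hshift : ∀ s ∈ range k,
        2*((s+1:ℕ):ℚ)*((2*k+1).factorial:ℚ) /
          (((2*k+2-2*(s+1)).factorial:ℚ)*((s+1).factorial:ℚ)*(((s+1)+q).factorial:ℚ))
        = 2*((2*k+1:ℕ):ℚ)*(((2*k).factorial):ℚ) *
          (1/(((2*k-2*s).factorial:ℚ)*(s.factorial:ℚ)*((s+(q+1)).factorial:ℚ))) := by
      intro s hs
      have : s < k := Finset.mem_range.mp hs
      exact term_shift (2*k) s q (by omega)
    rw [Finset.sum_congr rfl hshift, boundary k q]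
    ring
  have e_c : ∑ s ∈ range (k+1), 2*((2*k+1:ℕ):ℚ)*(((2*k).factorial):ℚ) *
        (1/(((2*k-2*s).factorial:ℚ)*(s.factorial:ℚ)*((s+(q+1)).factorial:ℚ)))
    = ∑ s ∈ range (k+1), 2*((2*k+1:ℕ):ℚ) * (((2*k).factorial:ℚ) *
        (1/(((2*k-2*s).factorial:ℚ)*(s.factorial:ℚ)*((s+(q+1)).factorial:ℚ)))) := by
    refine Finset.sum_congr rfl fun s _ => by ring
  linarith [e_main, e_h, e_c]

lemma case_even (k q : ℕ) :
    motzkinAssoc q (2*k+3)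
      = motzkinAssoc q (2*k+2) + 2*((2*k+2:ℕ):ℚ) * motzkinAssoc (q+1) (2*k+1) := by
  unfold motzkinAssoc
  have d1 : (2*k+3)/2 + 1 = k+2 := by omega
  have d2 : (2*k+2)/2 + 1 = k+2 := by omega
  have d3 : (2*k+1)/2 + 1 = k+1 := by omega
  rw [d1, d2, d3, Finset.mul_sum, Finset.mul_sum, Finset.mul_sum, Finset.mul_sum]
  have e_main : ∑ r ∈ range (k+2),
      ((2*k+3).factorial:ℚ) * (1/(((2*k+3-2*r).factorial:ℚ)*(r.factorial:ℚ)*((r+q).factorial:ℚ)))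
    = ∑ r ∈ range (k+2),
      (((2*k+2).factorial:ℚ) * (1/(((2*k+2-2*r).factorial:ℚ)*(r.factorial:ℚ)*((r+q).factorial:ℚ)))
        + 2*(r:ℚ)*((2*k+2).factorial:ℚ) /
          (((2*k+3-2*r).factorial:ℚ)*(r.factorial:ℚ)*((r+q).factorial:ℚ))) := by
    refine Finset.sum_congr rfl fun r hr => ?_
    have : r < k+2 := Finset.mem_range.mp hr
    exact term_split (2*k+1) r q (by omega)
  rw [Finset.sum_add_distrib] at e_main
  have e_h : (∑ r ∈ range (k+2), 2*(r:ℚ)*((2*k+2).factorial:ℚ) /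
        (((2*k+3-2*r).factorial:ℚ)*(r.factorial:ℚ)*((r+q).factorial:ℚ)))
    = ∑ s ∈ range (k+1), 2*((2*k+2:ℕ):ℚ)*(((2*k+1).factorial):ℚ) *
        (1/(((2*k+1-2*s).factorial:ℚ)*(s.factorial:ℚ)*((s+(q+1)).factorial:ℚ))) := by
    rw [Finset.sum_range_succ' _ (k+1)]
    have h0 : 2*((0:ℕ):ℚ)*((2*k+2).factorial:ℚ) /
        (((2*k+3-2*0).factorial:ℚ)*((0:ℕ).factorial:ℚ)*(((0:ℕ)+q).factorial:ℚ)) = 0 := by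
      norm_num
    rw [h0]
    have hshift : ∀ s ∈ range (k+1),
        2*((s+1:ℕ):ℚ)*((2*k+2).factorial:ℚ) /
          (((2*k+3-2*(s+1)).factorial:ℚ)*((s+1).factorial:ℚ)*(((s+1)+q).factorial:ℚ))
        = 2*((2*k+2:ℕ):ℚ)*(((2*k+1).factorial):ℚ) *
          (1/(((2*k+1-2*s).factorial:ℚ)*(s.factorial:ℚ)*((s+(q+1)).factorial:ℚ))) := by
      intro s hs
      have : s < k+1 := Finset.mem_range.mp hs
      exact term_shift (2*k+1) s q (by omega)
    rw [Finset.sum_congr rfl hshift]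
    ring
  have e_c : ∑ s ∈ range (k+1), 2*((2*k+2:ℕ):ℚ)*(((2*k+1).factorial):ℚ) *
        (1/(((2*k+1-2*s).factorial:ℚ)*(s.factorial:ℚ)*((s+(q+1)).factorial:ℚ)))
    = ∑ s ∈ range (k+1), 2*((2*k+2:ℕ):ℚ) * (((2*k+1).factorial:ℚ) *
        (1/(((2*k+1-2*s).factorial:ℚ)*(s.factorial:ℚ)*((s+(q+1)).factorial:ℚ)))) := by
    refine Finset.sum_congr rfl fun s _ => by ring
  linarith [e_main, e_h, e_c]

/-- for `n ≥ 1` and `q ≥ 0`,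
`m_{n+1}^{(q)} = m_n^{(q)} + 2 n m_{n-1}^{(q+1)}`. -/
theorem motzkinAssoc_recurrence (n q : ℕ) (hn : 1 ≤ n) :
    motzkinAssoc q (n + 1) =
      motzkinAssoc q n + 2 * (n : ℚ) * motzkinAssoc (q + 1) (n - 1) := by
  rcases Nat.even_or_odd' n with ⟨k, hk | hk⟩
  · obtain ⟨j, rfl⟩ : ∃ j, k = j + 1 := ⟨k - 1, by omega⟩
    subst hk
    have h1 : 2*(j+1) + 1 = 2*j+3 := by ring
    have h3 : 2*(j+1) - 1 = 2*j+1 := by omega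
    have h2 : 2*(j+1) = 2*j+2 := by ring
    rw [h1, h3, h2]
    exact case_even j q
  · subst hk
    have h1 : 2*k+1+1 = 2*k+2 := by ring
    have h3 : 2*k+1-1 = 2*k := by omega
    rw [h1, h3]
    exact case_odd k q
end

section
/- For all integers n ≥ 0 and p ≥ 0, the Motzkin numbers satisfy m_{n+p} = ∑_{s=0}^{min(n,p)} 2^s · s! · binomial(p,s) · binomial(n,s) · M_{p-s, n-s, s}, where M_{p,n,t} = p! ∑_{r=0}^{⌊p/2⌋} m_n^{(t+r+1)} / ((p-2r)!·r!) and the identity holds in the rational numbers. -/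
open Finset

/-- `M_{p,n,t} = p! ∑_{r=0}^{⌊p/2⌋} m_n^{(t+r+1)} / ((p-2r)!·r!)`. -/
noncomputable def MAux (p n t : ℕ) : ℚ :=
  (p.factorial : ℚ) * ∑ r ∈ range (p / 2 + 1),
    motzkinAssoc (t + r + 1) n / (((p - 2 * r).factorial : ℚ) * (r.factorial : ℚ))

open Polynomial

lemma fact_ne_s8 (m : ℕ) : ((m.factorial : ℚ)) ≠ 0 := by
  exact_mod_cast m.factorial_ne_zero

lemma lhs_eq (N : ℕ) :
    motzkin N = ∑ k ∈ range (N + 1),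
      (N.descFactorial (2 * k) : ℚ) / ((k.factorial : ℚ) * ((k + 1).factorial : ℚ)) := by
  rw [motzkin, motzkinAssoc, Finset.mul_sum]
  rw [← Finset.sum_subset (Finset.range_subset_range.2 (show N / 2 + 1 ≤ N + 1 by omega))
    (fun k _ hk => by
      rw [mem_range, not_lt] at hk
      rw [Nat.descFactorial_eq_zero_iff_lt.2 (by omega), Nat.cast_zero, zero_div])]
  apply Finset.sum_congr rfl
  intro k hk
  rw [mem_range, Nat.lt_succ_iff] at hk
  have h2k : 2 * k ≤ N := by omega
  have hfac : ((N.factorial : ℚ)) = ((N - 2 * k).factorial : ℚ) * (N.descFactorial (2 * k) : ℚ) := by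
    exact_mod_cast (Nat.factorial_mul_descFactorial h2k).symm
  rw [hfac]
  rw [eq_div_iff (by positivity)]
  field_simp

noncomputable def gQ (n p s r j : ℕ) : ℚ :=
  ((2 ^ s * p.descFactorial (s + 2 * r) * n.descFactorial (s + 2 * j) : ℕ) : ℚ) /
    ((s.factorial * r.factorial * j.factorial * (s + r + j + 1).factorial : ℕ) : ℚ)

lemma per_s (n p s : ℕ) (hsn : s ≤ n) (hsp : s ≤ p) :
    2 ^ s * (s.factorial : ℚ) * (p.choose s : ℚ) * (n.choose s : ℚ) * MAux (p - s) (n - s) s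
      = ∑ r ∈ range ((p - s) / 2 + 1), ∑ j ∈ range ((n - s) / 2 + 1), gQ n p s r j := by
  rw [MAux, Finset.mul_sum, Finset.mul_sum]
  apply Finset.sum_congr rfl
  intro r hr
  rw [mem_range, Nat.lt_succ_iff] at hr
  rw [motzkinAssoc, Finset.mul_sum, Finset.sum_div, Finset.mul_sum, Finset.mul_sum]
  apply Finset.sum_congr rfl
  intro j hj
  rw [mem_range, Nat.lt_succ_iff] at hj
  have hsp2 : s + 2 * r ≤ p := by omega
  have hsn2 : s + 2 * j ≤ n := by omega
  have hdp : ((p.descFactorial (s + 2 * r) * (p - s - 2 * r).factorial : ℕ) : ℚ)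
      = ((p.choose s * s.factorial * (p - s).factorial : ℕ) : ℚ) := by
    congr 1
    rw [Nat.choose_mul_factorial_mul_factorial hsp, Nat.mul_comm,
      show p - s - 2 * r = p - (s + 2 * r) by omega, Nat.factorial_mul_descFactorial hsp2]
  have hdn : ((n.descFactorial (s + 2 * j) * (n - s - 2 * j).factorial : ℕ) : ℚ)
      = ((n.choose s * s.factorial * (n - s).factorial : ℕ) : ℚ) := by
    congr 1
    rw [Nat.choose_mul_factorial_mul_factorial hsn, Nat.mul_comm,
      show n - s - 2 * j = n - (s + 2 * j) by omega, Nat.factorial_mul_descFactorial hsn2]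
  have hix : j + (s + r + 1) = s + r + j + 1 := by omega
  rw [gQ, hix]
  push_cast at hdp hdn ⊢
  have hdp' : ((p.descFactorial (s + 2 * r) : ℕ) : ℚ)
      = (p.choose s : ℚ) * (s.factorial : ℚ) * ((p - s).factorial : ℚ)
        / ((p - s - 2 * r).factorial : ℚ) := by
    rw [eq_div_iff (fact_ne_s8 _)]; linear_combination hdp
  have hdn' : ((n.descFactorial (s + 2 * j) : ℕ) : ℚ)
      = (n.choose s : ℚ) * (s.factorial : ℚ) * ((n - s).factorial : ℚ)
        / ((n - s - 2 * j).factorial : ℚ) := by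
    rw [eq_div_iff (fact_ne_s8 _)]; linear_combination hdn
  rw [hdp', hdn']
  field_simp

lemma gQ_eq_zero_p {n p s r j : ℕ} (h : p < s + 2 * r) : gQ n p s r j = 0 := by
  simp [gQ, Nat.descFactorial_eq_zero_iff_lt.2 h]

lemma gQ_eq_zero_n {n p s r j : ℕ} (h : n < s + 2 * j) : gQ n p s r j = 0 := by
  simp [gQ, Nat.descFactorial_eq_zero_iff_lt.2 h]

lemma ext_rj (n p s : ℕ) (hsn : s ≤ n) (hsp : s ≤ p) :
    ∑ r ∈ range ((p - s) / 2 + 1), ∑ j ∈ range ((n - s) / 2 + 1), gQ n p s r j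
      = ∑ r ∈ range (n + p + 1), ∑ j ∈ range (n + p + 1), gQ n p s r j := by
  have hinner : ∀ r : ℕ, ∑ j ∈ range ((n - s) / 2 + 1), gQ n p s r j
      = ∑ j ∈ range (n + p + 1), gQ n p s r j := by
    intro r
    apply Finset.sum_subset (Finset.range_subset_range.2 (by omega))
    intro j _ hj
    rw [mem_range, not_lt] at hj
    exact gQ_eq_zero_n (by omega)
  rw [Finset.sum_congr rfl (fun r _ => hinner r)]
  apply Finset.sum_subset (Finset.range_subset_range.2 (by omega))
  intro r _ hr
  rw [mem_range, not_lt] at hr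
  exact Finset.sum_eq_zero (fun j _ => gQ_eq_zero_p (by omega))


lemma coeff_two_X_add_one_pow (m t : ℕ) :
    (((2 * X + 1 : Polynomial ℕ)) ^ m).coeff t = 2 ^ t * m.choose t := by
  rw [add_pow]
  rw [finset_sum_coeff]
  have : ∀ u ∈ range (m + 1),
      ((2 * X : Polynomial ℕ) ^ u * 1 ^ (m - u) * (m.choose u : Polynomial ℕ)).coeff t
      = if t = u then 2 ^ t * m.choose t else 0 := by
    intro u _
    rw [one_pow, mul_one, mul_pow, ← C_eq_natCast, coeff_mul_C, (show (2:Polynomial ℕ) = C 2 from rfl), ← C_pow, coeff_C_mul,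
      coeff_X_pow]
    split_ifs with h
    · subst h; push_cast; ring
    · ring
  rw [Finset.sum_congr rfl this, Finset.sum_ite_eq]
  split_ifs with h
  · rfl
  · rw [mem_range, not_lt] at h
    rw [Nat.choose_eq_zero_of_lt (by omega), Nat.mul_zero]

lemma trinom (k i : ℕ) :
    (2 * k).choose i = ∑ j ∈ range (i / 2 + 1), k.choose j * (k - j).choose (i - 2 * j) * 2 ^ (i - 2 * j) := by
  have h1 : ((X + 1 : Polynomial ℕ) ^ (2 * k)).coeff i = (2 * k).choose i := by
    rw [coeff_X_add_one_pow, Nat.cast_id]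
  have h2 : (X + 1 : Polynomial ℕ) ^ (2 * k) = (X ^ 2 + (2 * X + 1)) ^ k := by
    rw [pow_mul]
    rw [show ((X:Polynomial ℕ)+1)^2 = X ^ 2 + (2 * X + 1) by ring]
  rw [h2, add_pow, finset_sum_coeff] at h1
  have h3 : ∀ j ∈ range (k + 1),
      (((X : Polynomial ℕ) ^ 2) ^ j * (2 * X + 1) ^ (k - j) * ((k.choose j : ℕ) : Polynomial ℕ)).coeff i
      = if 2 * j ≤ i then k.choose j * (k - j).choose (i - 2 * j) * 2 ^ (i - 2 * j) else 0 := by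
    intro j _
    rw [← pow_mul, ← C_eq_natCast, coeff_mul_C, mul_comm ((X : Polynomial ℕ) ^ (2 * j)),
      coeff_mul_X_pow']
    split_ifs with h
    · rw [coeff_two_X_add_one_pow]; push_cast; ring
    · ring
  rw [Finset.sum_congr rfl h3] at h1
  rw [← h1]
  have e2 : ∑ j ∈ range (k + 1),
        (if 2 * j ≤ i then k.choose j * (k - j).choose (i - 2 * j) * 2 ^ (i - 2 * j) else 0)
      = ∑ j ∈ range (k + i + 1),
        (if 2 * j ≤ i then k.choose j * (k - j).choose (i - 2 * j) * 2 ^ (i - 2 * j) else 0) := by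
    apply Finset.sum_subset (by apply Finset.range_subset_range.2; omega)
    intro j _ hj
    rw [mem_range, not_lt] at hj
    rw [Nat.choose_eq_zero_of_lt (by omega), Nat.zero_mul, Nat.zero_mul, ite_self]
  rw [e2, ← Finset.sum_filter]
  apply Finset.sum_congr
  · ext j
    simp only [mem_filter, mem_range]
    omega
  · intro _ _; rfl



lemma multinom_symm {s r j k : ℕ} (h : s + r + j = k) :
    k.choose s * (k - s).choose r = k.choose j * (k - j).choose s := by
  have h1 : k.choose s * s.factorial * (k - s).factorial = k.factorial :=
    Nat.choose_mul_factorial_mul_factorial (by omega)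
  have h2 : (k - s).choose r * r.factorial * (k - s - r).factorial = (k - s).factorial :=
    Nat.choose_mul_factorial_mul_factorial (by omega)
  have h3 : k.choose j * j.factorial * (k - j).factorial = k.factorial :=
    Nat.choose_mul_factorial_mul_factorial (by omega)
  have h4 : (k - j).choose s * s.factorial * (k - j - s).factorial = (k - j).factorial :=
    Nat.choose_mul_factorial_mul_factorial (by omega)
  have hj : k - s - r = j := by omega
  have hr : k - j - s = r := by omega
  rw [hj] at h2; rw [hr] at h4
  have key : k.choose s * (k - s).choose r * (s.factorial * r.factorial * j.factorial)
      = k.choose j * (k - j).choose s * (s.factorial * r.factorial * j.factorial) := by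
    calc k.choose s * (k - s).choose r * (s.factorial * r.factorial * j.factorial)
        = (k.choose s * s.factorial) * ((k - s).choose r * r.factorial * j.factorial) := by ring
      _ = k.choose s * s.factorial * (k - s).factorial := by rw [← h2]
      _ = k.factorial := h1
      _ = k.choose j * j.factorial * (k - j).factorial := h3.symm
      _ = (k.choose j * j.factorial) * ((k - j).choose s * s.factorial * r.factorial) := by rw [h4]
      _ = k.choose j * (k - j).choose s * (s.factorial * r.factorial * j.factorial) := by ring
  exact Nat.eq_of_mul_eq_mul_right (by positivity) key

lemma key_nat (n p k : ℕ) :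
    ∑ s ∈ range (k + 1), ∑ r ∈ range (k - s + 1),
        k.choose s * (k - s).choose r * 2 ^ s * p.descFactorial (s + 2 * r)
          * n.descFactorial (s + 2 * (k - s - r))
      = (n + p).descFactorial (2 * k) := by
  have hRHS : (n + p).descFactorial (2 * k)
      = ∑ i ∈ range (2 * k + 1),
          (2 * k).choose i * n.descFactorial i * p.descFactorial (2 * k - i) := by
    rw [Nat.descFactorial_eq_factorial_mul_choose, Nat.add_choose_eq,
      Finset.Nat.sum_antidiagonal_eq_sum_range_succ_mk, Finset.mul_sum]
    apply Finset.sum_congr rfl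
    intro i hi
    rw [mem_range, Nat.lt_succ_iff] at hi
    rw [Nat.descFactorial_eq_factorial_mul_choose, Nat.descFactorial_eq_factorial_mul_choose,
      ← Nat.choose_mul_factorial_mul_factorial hi]
    ring
  have step2 : ∀ i ∈ range (2 * k + 1),
      (2 * k).choose i * n.descFactorial i * p.descFactorial (2 * k - i)
      = ∑ j ∈ range (i / 2 + 1),
          k.choose j * (k - j).choose (i - 2 * j) * 2 ^ (i - 2 * j)
            * n.descFactorial i * p.descFactorial (2 * k - i) := by
    intro i _
    rw [trinom, Finset.sum_mul, Finset.sum_mul]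
  rw [hRHS, Finset.sum_congr rfl step2, Finset.sum_sigma', Finset.sum_sigma']
  set tB : (Σ _ : ℕ, ℕ) → ℕ := fun x =>
    k.choose x.2 * (k - x.2).choose (x.1 - 2 * x.2) * 2 ^ (x.1 - 2 * x.2)
      * n.descFactorial x.1 * p.descFactorial (2 * k - x.1) with htB
  set Bsig : Finset (Σ _ : ℕ, ℕ) := (range (2 * k + 1)).sigma (fun i => range (i / 2 + 1))
    with hBsig
  have hfilter : ∑ x ∈ Bsig.filter (fun x => x.1 ≤ k + x.2), tB x = ∑ x ∈ Bsig, tB x := by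
    apply Finset.sum_filter_of_ne
    rintro ⟨i, j⟩ hx hne
    simp only [hBsig, mem_sigma, mem_range, Nat.lt_succ_iff] at hx
    by_contra hgt
    simp only [not_le] at hgt
    apply hne
    simp only [htB]
    rcases le_or_gt j k with hjk | hjk
    · rw [Nat.choose_eq_zero_of_lt (show k - j < i - 2 * j by omega)]
      ring
    · rw [Nat.choose_eq_zero_of_lt hjk]
      ring
  rw [← hfilter]
  apply Finset.sum_nbij' (fun x => (⟨x.1 + 2 * (k - x.1 - x.2), k - x.1 - x.2⟩ : Σ _ : ℕ, ℕ))
    (fun x => (⟨x.1 - 2 * x.2, k - (x.1 - x.2)⟩ : Σ _ : ℕ, ℕ))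
  · rintro ⟨s, r⟩ hx
    simp only [hBsig, mem_sigma, mem_range, Nat.lt_succ_iff] at hx
    simp only [hBsig, mem_filter, mem_sigma, mem_range, Nat.lt_succ_iff]
    omega
  · rintro ⟨i, j⟩ hx
    simp only [hBsig, mem_filter, mem_sigma, mem_range, Nat.lt_succ_iff] at hx
    simp only [hBsig, mem_sigma, mem_range, Nat.lt_succ_iff]
    omega
  · rintro ⟨s, r⟩ hx
    simp only [hBsig, mem_sigma, mem_range, Nat.lt_succ_iff] at hx
    have h1 : s + 2 * (k - s - r) - 2 * (k - s - r) = s := by omega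
    have h2 : k - (s + 2 * (k - s - r) - (k - s - r)) = r := by omega
    simp only [h1, h2]
  · rintro ⟨i, j⟩ hx
    simp only [hBsig, mem_filter, mem_sigma, mem_range, Nat.lt_succ_iff] at hx
    have h2 : k - (i - 2 * j) - (k - (i - j)) = j := by omega
    have h3 : i - 2 * j + 2 * j = i := by omega
    simp only [h2, h3]
  · rintro ⟨s, r⟩ hx
    simp only [hBsig, mem_sigma, mem_range, Nat.lt_succ_iff] at hx
    simp only [htB]
    have h1 : s + 2 * (k - s - r) - 2 * (k - s - r) = s := by omega
    have h2 : 2 * k - (s + 2 * (k - s - r)) = s + 2 * r := by omega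
    rw [h1, h2, multinom_symm (show s + r + (k - s - r) = k by omega)]
    ring

lemma fiber_sum (n p k : ℕ) (hk : k ≤ n + p) :
    ∑ x ∈ ((range (n + p + 1) ×ˢ (range (n + p + 1) ×ˢ range (n + p + 1))).filter
        (fun x => x.1 + x.2.1 + x.2.2 = k)), gQ n p x.1 x.2.1 x.2.2
      = ((n + p).descFactorial (2 * k) : ℚ) /
          ((k.factorial : ℚ) * ((k + 1).factorial : ℚ)) := by
  have hbij : ∑ x ∈ ((range (n + p + 1) ×ˢ (range (n + p + 1) ×ˢ range (n + p + 1))).filter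
        (fun x => x.1 + x.2.1 + x.2.2 = k)), gQ n p x.1 x.2.1 x.2.2
      = ∑ y ∈ (range (k + 1)).sigma (fun s => range (k - s + 1)),
          gQ n p y.1 y.2 (k - y.1 - y.2) := by
    apply Finset.sum_nbij' (fun x => (⟨x.1, x.2.1⟩ : Σ _ : ℕ, ℕ))
      (fun y => ((y.1, y.2, k - y.1 - y.2) : ℕ × ℕ × ℕ))
    · rintro ⟨s, r, j⟩ hx
      simp only [mem_filter, mem_product, mem_range, Nat.lt_succ_iff] at hx
      simp only [mem_sigma, mem_range, Nat.lt_succ_iff]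
      omega
    · rintro ⟨s, r⟩ hy
      simp only [mem_sigma, mem_range, Nat.lt_succ_iff] at hy
      simp only [mem_filter, mem_product, mem_range, Nat.lt_succ_iff]
      omega
    · rintro ⟨s, r, j⟩ hx
      simp only [mem_filter, mem_product, mem_range, Nat.lt_succ_iff] at hx
      have : k - s - r = j := by omega
      simp only [this]
    · rintro ⟨s, r⟩ hy
      rfl
    · rintro ⟨s, r, j⟩ hx
      simp only [mem_filter, mem_product, mem_range, Nat.lt_succ_iff] at hx
      have : k - s - r = j := by omega
      simp only [this]
  rw [hbij, Finset.sum_sigma]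
  have hterm : ∀ s ∈ range (k + 1), ∀ r ∈ range (k - s + 1),
      gQ n p s r (k - s - r)
        = ((k.choose s * (k - s).choose r * 2 ^ s * p.descFactorial (s + 2 * r)
            * n.descFactorial (s + 2 * (k - s - r)) : ℕ) : ℚ)
          / ((k.factorial : ℚ) * ((k + 1).factorial : ℚ)) := by
    intro s hs r hr
    rw [mem_range, Nat.lt_succ_iff] at hs hr
    have e1 := Nat.choose_mul_factorial_mul_factorial hs
    have e2 := Nat.choose_mul_factorial_mul_factorial (show r ≤ k - s from hr)
    have emul : k.choose s * (k - s).choose r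
        * (s.factorial * r.factorial * (k - s - r).factorial) = k.factorial := by
      calc k.choose s * (k - s).choose r
            * (s.factorial * r.factorial * (k - s - r).factorial)
          = k.choose s * s.factorial
            * ((k - s).choose r * r.factorial * (k - s - r).factorial) := by ring
        _ = k.choose s * s.factorial * (k - s).factorial := by rw [e2]
        _ = k.factorial := e1
    rw [gQ, show s + r + (k - s - r) + 1 = k + 1 by omega]
    rw [div_eq_div_iff (by positivity) (by positivity)]
    have emulQ : (k.choose s : ℚ) * ((k - s).choose r : ℚ)
        * ((s.factorial : ℚ) * (r.factorial : ℚ) * ((k - s - r).factorial : ℚ))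
        = (k.factorial : ℚ) := by exact_mod_cast emul
    push_cast
    linear_combination ((2:ℚ) ^ s * (p.descFactorial (s + 2 * r) : ℚ)
      * (n.descFactorial (s + 2 * (k - s - r)) : ℚ) * ((k+1).factorial : ℚ)) * emulQ.symm
  rw [Finset.sum_congr rfl (fun s hs => Finset.sum_congr rfl (fun r hr => hterm s hs r hr))]
  simp only [← Finset.sum_div]
  congr 1
  exact_mod_cast key_nat n p k

lemma partC (n p : ℕ) :
    ∑ s ∈ range (n + p + 1), ∑ r ∈ range (n + p + 1), ∑ j ∈ range (n + p + 1), gQ n p s r j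
      = ∑ k ∈ range (n + p + 1), ((n + p).descFactorial (2 * k) : ℚ) /
          ((k.factorial : ℚ) * ((k + 1).factorial : ℚ)) := by
  have h1 : ∑ s ∈ range (n + p + 1), ∑ r ∈ range (n + p + 1), ∑ j ∈ range (n + p + 1),
        gQ n p s r j
      = ∑ x ∈ range (n + p + 1) ×ˢ (range (n + p + 1) ×ˢ range (n + p + 1)),
          gQ n p x.1 x.2.1 x.2.2 := by
    rw [Finset.sum_product]
    apply Finset.sum_congr rfl
    intro s _
    rw [Finset.sum_product]
  have hmap : ∀ x ∈ range (n + p + 1) ×ˢ (range (n + p + 1) ×ˢ range (n + p + 1)),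
      x.1 + x.2.1 + x.2.2 ∈ range (3 * (n + p) + 3) := by
    rintro ⟨s, r, j⟩ hx
    simp only [mem_product, mem_range] at hx ⊢
    omega
  have h2 := Finset.sum_fiberwise_of_maps_to hmap (fun x : ℕ × ℕ × ℕ => gQ n p x.1 x.2.1 x.2.2)
  have h3 : ∑ k ∈ range (n + p + 1), ((n + p).descFactorial (2 * k) : ℚ) /
        ((k.factorial : ℚ) * ((k + 1).factorial : ℚ))
      = ∑ k ∈ range (3 * (n + p) + 3), ((n + p).descFactorial (2 * k) : ℚ) /
        ((k.factorial : ℚ) * ((k + 1).factorial : ℚ)) := by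
    apply Finset.sum_subset (Finset.range_subset_range.2 (show n + p + 1 ≤ 3 * (n + p) + 3 by omega))
    intro k _ hk
    rw [mem_range, not_lt] at hk
    rw [Nat.descFactorial_eq_zero_iff_lt.2 (by omega), Nat.cast_zero, zero_div]
  rw [h1, ← h2, h3]
  apply Finset.sum_congr rfl
  intro k hk
  rw [mem_range] at hk
  rcases le_or_gt k (n + p) with hkN | hkN
  · exact fiber_sum n p k hkN
  · rw [Nat.descFactorial_eq_zero_iff_lt.2 (by omega), Nat.cast_zero, zero_div]
    apply Finset.sum_eq_zero
    rintro ⟨s, r, j⟩ hx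
    simp only [mem_filter, mem_product, mem_range] at hx
    rcases le_or_gt (s + 2 * r) p with h1 | h1
    · exact gQ_eq_zero_n (show n < ((s, r, j) : ℕ × ℕ × ℕ).1 + 2 * ((s, r, j) : ℕ × ℕ × ℕ).2.2 by simp; omega)
    · exact gQ_eq_zero_p (show p < ((s, r, j) : ℕ × ℕ × ℕ).1 + 2 * ((s, r, j) : ℕ × ℕ × ℕ).2.1 by simp; omega)


/-- for all `n, p ≥ 0`,
`m_{n+p} = ∑_{s=0}^{min(n,p)} 2^s s! C(p,s) C(n,s) M_{p-s, n-s, s}`. -/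
theorem motzkin_addition_formula (n p : ℕ) :
    motzkin (n + p) =
      ∑ s ∈ range (min n p + 1),
        2 ^ s * (s.factorial : ℚ) * (p.choose s : ℚ) * (n.choose s : ℚ) *
          MAux (p - s) (n - s) s := by
  have hstep : ∀ s ∈ range (min n p + 1),
      2 ^ s * (s.factorial : ℚ) * (p.choose s : ℚ) * (n.choose s : ℚ) * MAux (p - s) (n - s) s
      = ∑ r ∈ range (n + p + 1), ∑ j ∈ range (n + p + 1), gQ n p s r j := by
    intro s hs
    rw [mem_range, Nat.lt_succ_iff] at hs
    rw [per_s n p s (by omega) (by omega), ext_rj n p s (by omega) (by omega)]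
  rw [Finset.sum_congr rfl hstep]
  have hext : ∑ s ∈ range (min n p + 1), ∑ r ∈ range (n + p + 1), ∑ j ∈ range (n + p + 1),
        gQ n p s r j
      = ∑ s ∈ range (n + p + 1), ∑ r ∈ range (n + p + 1), ∑ j ∈ range (n + p + 1),
        gQ n p s r j := by
    apply Finset.sum_subset (Finset.range_subset_range.2 (by omega))
    intro s _ hs
    rw [mem_range, not_lt] at hs
    apply Finset.sum_eq_zero
    intro r _
    apply Finset.sum_eq_zero
    intro j _
    rcases le_or_gt s p with h1 | h1
    · exact gQ_eq_zero_n (by omega)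
    · exact gQ_eq_zero_p (by omega)
  rw [hext, partC, lhs_eq]
end

section
/- For every integer n ≥ 0, the discrete self-convolution of the Motzkin numbers satisfies ∑_{s=0}^{n} m_{n-s} · m_s = 2·(n+1)·m_n^{(2)}, an identity in the rational numbers. -/
open Finset

/-- Vandermonde-type convolution of binomial coefficients. -/
lemma choose_conv (n : ℕ) : ∀ (a b : ℕ),
    ∑ s ∈ range (n+1), s.choose a * (n-s).choose b = (n+1).choose (a+b+1) := by
  induction n with
  | zero =>
    intro a b
    simp only [Nat.zero_add, range_one, sum_singleton, Nat.zero_sub]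
    rcases a with _ | a
    · rcases b with _ | b
      · simp
      · rw [Nat.choose_eq_zero_of_lt (show 1 < 0+(b+1)+1 by omega)]; simp
    · rw [Nat.choose_eq_zero_of_lt (show 1 < a+1+b+1 by omega), Nat.choose_zero_succ]; simp
  | succ n ih =>
    intro a b
    rw [sum_range_succ]
    rcases b with _ | c
    · have h : ∀ s ∈ range (n+1), s.choose a * (n+1-s).choose 0
          = s.choose a * (n-s).choose 0 := by
        intro s _; simp
      rw [sum_congr rfl h, ih a 0, Nat.sub_self]
      simp only [Nat.choose_zero_right, Nat.mul_one, Nat.add_zero]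
      rw [Nat.choose_succ_succ' (n+1) a]
      omega
    · have h : ∀ s ∈ range (n+1), s.choose a * (n+1-s).choose (c+1)
          = s.choose a * (n-s).choose c + s.choose a * (n-s).choose (c+1) := by
        intro s hs
        rw [mem_range] at hs
        have hns : n + 1 - s = (n - s) + 1 := by omega
        rw [hns, Nat.choose_succ_succ' (n-s) c, Nat.mul_add]
      rw [sum_congr rfl h, sum_add_distrib, ih a c, ih a (c+1)]
      simp only [Nat.sub_self, Nat.choose_zero_succ, Nat.mul_zero, Nat.add_zero]
      have e : a + (c+1) + 1 = (a+c+1) + 1 := by omega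
      rw [e, Nat.choose_succ_succ' (n+1) (a+c+1)]

lemma motzkin_term (j r : ℕ) (h : 2*r ≤ j) :
    j.choose (2*r) * catalan r * ((j - 2*r).factorial * r.factorial * (r+1).factorial)
      = j.factorial := by
  have hc : (r+1) * catalan r = Nat.centralBinom r := succ_mul_catalan_eq_centralBinom r
  have h1 : (2*r).choose r * r.factorial * r.factorial = (2*r).factorial := by
    have := Nat.choose_mul_factorial_mul_factorial (show r ≤ 2*r by omega)
    simpa [show 2*r - r = r by omega] using this
  have h2 : j.choose (2*r) * (2*r).factorial * (j - 2*r).factorial = j.factorial :=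
    Nat.choose_mul_factorial_mul_factorial h
  calc j.choose (2*r) * catalan r * ((j - 2*r).factorial * r.factorial * (r+1).factorial)
      = j.choose (2*r) * (((r+1) * catalan r) * r.factorial * r.factorial)
          * (j - 2*r).factorial := by
        rw [Nat.factorial_succ]; ring
    _ = j.choose (2*r) * (2*r).factorial * (j - 2*r).factorial := by
        rw [hc, Nat.centralBinom, h1]
    _ = j.factorial := h2
lemma assoc2_term (n m : ℕ) (h : 2*m ≤ n) :
    (n+1).choose (2*m+1) * catalan (m+1)
        * ((n - 2*m).factorial * m.factorial * (m+2).factorial)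
      = 2*(n+1)*n.factorial := by
  have hc : (m+2) * catalan (m+1) = Nat.centralBinom (m+1) :=
    succ_mul_catalan_eq_centralBinom (m+1)
  have h1 : (2*(m+1)).choose (m+1) * (m+1).factorial * (m+1).factorial
      = (2*(m+1)).factorial := by
    have := Nat.choose_mul_factorial_mul_factorial (show m+1 ≤ 2*(m+1) by omega)
    simpa [show 2*(m+1) - (m+1) = m+1 by omega] using this
  have h2 : (n+1).choose (2*m+1) * (2*m+1).factorial * (n - 2*m).factorial
      = (n+1).factorial := by
    have := Nat.choose_mul_factorial_mul_factorial (show 2*m+1 ≤ n+1 by omega)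
    simpa [show n+1 - (2*m+1) = n - 2*m by omega] using this
  have key : (m+1) * ((n+1).choose (2*m+1) * catalan (m+1)
        * ((n - 2*m).factorial * m.factorial * (m+2).factorial))
      = (m+1) * (2*(n+1)*n.factorial) := by
    calc (m+1) * ((n+1).choose (2*m+1) * catalan (m+1)
          * ((n - 2*m).factorial * m.factorial * (m+2).factorial))
        = (n+1).choose (2*m+1) * (((m+2) * catalan (m+1)) * (m+1).factorial
            * (m+1).factorial) * (n - 2*m).factorial := by
          rw [Nat.factorial_succ (m+1), Nat.factorial_succ m]; ring
      _ = (n+1).choose (2*m+1) * (2*(m+1)).factorial * (n - 2*m).factorial := by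
          rw [hc, Nat.centralBinom, h1]
      _ = (m+1) * (2*(n+1)*n.factorial) := by
          have e : 2*(m+1) = (2*m+1) + 1 := by omega
          rw [e, Nat.factorial_succ (2*m+1)]
          calc (n+1).choose (2*m+1) * ((2*m+1+1) * (2*m+1).factorial) * (n - 2*m).factorial
              = (2*m+2) * ((n+1).choose (2*m+1) * (2*m+1).factorial * (n - 2*m).factorial) := by
                ring
            _ = (2*m+2) * (n+1).factorial := by rw [h2]
            _ = (m+1) * (2*(n+1)*n.factorial) := by
                rw [Nat.factorial_succ n]; ring
  exact Nat.eq_of_mul_eq_mul_left (by omega) key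
lemma motzkin_eq (j N : ℕ) (h : j < N) :
    motzkin j = ∑ r ∈ range N, ((j.choose (2*r) * catalan r : ℕ) : ℚ) := by
  have step1 : motzkin j
      = ∑ r ∈ range (j/2 + 1), ((j.choose (2*r) * catalan r : ℕ) : ℚ) := by
    rw [motzkin, motzkinAssoc, Finset.mul_sum]
    refine Finset.sum_congr rfl fun r hr => ?_
    rw [mem_range] at hr
    have h2 : 2*r ≤ j := by
      have := Nat.div_mul_le_self j 2
      omega
    have hA : ((j - 2*r).factorial : ℚ) * (r.factorial : ℚ) * ((r+1).factorial : ℚ) ≠ 0 := by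
      positivity
    rw [mul_one_div, div_eq_iff hA]
    have hnat := motzkin_term j r h2
    have hq : ((j.choose (2*r) * catalan r * ((j - 2*r).factorial * r.factorial
        * (r+1).factorial) : ℕ) : ℚ) = (j.factorial : ℚ) := by exact_mod_cast congrArg (Nat.cast : ℕ → ℚ) hnat
    push_cast at hq ⊢
    linear_combination -hq
  rw [step1]
  refine Finset.sum_subset (Finset.range_subset_range.mpr (by omega)) fun r _ hr => ?_
  rw [mem_range] at hr
  push_neg at hr
  have : j < 2*r := by omega
  rw [Nat.choose_eq_zero_of_lt this]
  simp

lemma rhs_eq (n : ℕ) :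
    2 * ((n : ℚ) + 1) * motzkinAssoc 2 n
      = ∑ m ∈ range (n+1), (((n+1).choose (2*m+1) * catalan (m+1) : ℕ) : ℚ) := by
  have step1 : 2 * ((n : ℚ) + 1) * motzkinAssoc 2 n
      = ∑ m ∈ range (n/2 + 1), (((n+1).choose (2*m+1) * catalan (m+1) : ℕ) : ℚ) := by
    rw [motzkinAssoc, ← mul_assoc, Finset.mul_sum]
    refine Finset.sum_congr rfl fun m hm => ?_
    rw [mem_range] at hm
    have h2 : 2*m ≤ n := by
      have := Nat.div_mul_le_self n 2
      omega
    have hA : ((n - 2*m).factorial : ℚ) * (m.factorial : ℚ) * ((m+2).factorial : ℚ) ≠ 0 := by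
      positivity
    rw [mul_one_div, div_eq_iff hA]
    have hnat := assoc2_term n m h2
    have hq : (((n+1).choose (2*m+1) * catalan (m+1) * ((n - 2*m).factorial * m.factorial
        * (m+2).factorial) : ℕ) : ℚ) = ((2*(n+1)*n.factorial : ℕ) : ℚ) := by
      exact_mod_cast congrArg (Nat.cast : ℕ → ℚ) hnat
    push_cast at hq ⊢
    linear_combination -hq
  rw [step1]
  refine Finset.sum_subset (Finset.range_subset_range.mpr (by omega)) fun m _ hm => ?_
  rw [mem_range] at hm
  push_neg at hm
  have : n + 1 < 2*m + 1 := by omega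
  rw [Nat.choose_eq_zero_of_lt this]
  simp

lemma square_eq (n : ℕ) :
    ∑ a ∈ range (n+1), ∑ b ∈ range (n+1),
        catalan a * catalan b * (n+1).choose (2*(a+b)+1)
      = ∑ m ∈ range (n+1), (n+1).choose (2*m+1) * catalan (m+1) := by
  have step1 : ∀ a ∈ range (n+1),
      ∑ b ∈ range (n+1), catalan a * catalan b * (n+1).choose (2*(a+b)+1)
        = ∑ b ∈ range (n+1-a), catalan a * catalan b * (n+1).choose (2*(a+b)+1) := by
    intro a ha
    rw [mem_range] at ha
    refine (Finset.sum_subset (Finset.range_subset_range.mpr (by omega)) fun b _ hb => ?_).symm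
    rw [mem_range] at hb
    push_neg at hb
    rw [Nat.choose_eq_zero_of_lt (by omega), Nat.mul_zero]
  rw [Finset.sum_congr rfl step1,
    ← Finset.sum_range_diag_flip (n+1) (fun k l => catalan k * catalan l * (n+1).choose (2*(k+l)+1))]
  refine Finset.sum_congr rfl fun m hm => ?_
  have e : ∀ k ∈ range (m+1),
      catalan k * catalan (m-k) * (n+1).choose (2*(k+(m-k))+1)
        = catalan k * catalan (m-k) * (n+1).choose (2*m+1) := by
    intro k hk
    rw [mem_range] at hk
    rw [show k + (m-k) = m by omega]
  rw [Finset.sum_congr rfl e, ← Finset.sum_mul]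
  have hc : catalan (m+1) = ∑ k ∈ range (m+1), catalan k * catalan (m-k) := by
    rw [catalan_succ', Finset.Nat.sum_antidiagonal_eq_sum_range_succ_mk]
  rw [← hc, Nat.mul_comm]

/-- the discrete self-convolution of the Motzkin numbers:
`∑_{s=0}^{n} m_{n-s} m_s = 2 (n+1) m_n^{(2)}`. -/
theorem motzkin_self_convolution (n : ℕ) :
    ∑ s ∈ range (n + 1), motzkin (n - s) * motzkin s =
      2 * ((n : ℚ) + 1) * motzkinAssoc 2 n := by
  have hprod : ∀ s ∈ range (n+1), motzkin (n - s) * motzkin s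
      = ∑ a ∈ range (n+1), ∑ b ∈ range (n+1),
          (((n-s).choose (2*a) * catalan a : ℕ) : ℚ) * ((s.choose (2*b) * catalan b : ℕ) : ℚ) := by
    intro s hs
    rw [mem_range] at hs
    rw [motzkin_eq (n-s) (n+1) (by omega), motzkin_eq s (n+1) (by omega),
      Finset.sum_mul_sum]
  rw [Finset.sum_congr rfl hprod, Finset.sum_comm]
  have hswap : ∀ a ∈ range (n+1),
      ∑ s ∈ range (n+1), ∑ b ∈ range (n+1),
          (((n-s).choose (2*a) * catalan a : ℕ) : ℚ) * ((s.choose (2*b) * catalan b : ℕ) : ℚ)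
      = ∑ b ∈ range (n+1),
          ((catalan a * catalan b * (n+1).choose (2*(a+b)+1) : ℕ) : ℚ) := by
    intro a _
    rw [Finset.sum_comm]
    refine Finset.sum_congr rfl fun b _ => ?_
    have hnat : ∑ s ∈ range (n+1), ((n-s).choose (2*a) * catalan a) * (s.choose (2*b) * catalan b)
        = catalan a * catalan b * (n+1).choose (2*(a+b)+1) := by
      have h1 := choose_conv n (2*b) (2*a)
      calc ∑ s ∈ range (n+1), ((n-s).choose (2*a) * catalan a) * (s.choose (2*b) * catalan b)
          = (catalan a * catalan b) * ∑ s ∈ range (n+1), s.choose (2*b) * (n-s).choose (2*a) := by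
            rw [Finset.mul_sum]; exact Finset.sum_congr rfl fun s _ => by ring
        _ = (catalan a * catalan b) * (n+1).choose (2*(a+b)+1) := by
            rw [h1, show 2*b+2*a+1 = 2*(a+b)+1 by omega]
        _ = catalan a * catalan b * (n+1).choose (2*(a+b)+1) := rfl
    calc ∑ s ∈ range (n+1),
          (((n-s).choose (2*a) * catalan a : ℕ) : ℚ) * ((s.choose (2*b) * catalan b : ℕ) : ℚ)
        = ((∑ s ∈ range (n+1), ((n-s).choose (2*a) * catalan a) * (s.choose (2*b) * catalan b) : ℕ) : ℚ) := by
          push_cast; rfl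
      _ = ((catalan a * catalan b * (n+1).choose (2*(a+b)+1) : ℕ) : ℚ) := by rw [hnat]
  rw [Finset.sum_congr rfl hswap, rhs_eq]
  exact_mod_cast square_eq n
end

section
/- For every integer n ≥ 0, the telephone numbers satisfy the index-duplication identity T(2n) = ∑_{r=0}^{n} binomial(n,r)² · r! · (T(n-r))². -/
open Finset

/-- The telephone numbers `T(n) = n! ∑_{r=0}^{⌊n/2⌋} 1/((n-2r)!·r!·2^r)`,
as rational numbers. -/
noncomputable def telephone (n : ℕ) : ℚ :=
  (n.factorial : ℚ) * ∑ r ∈ range (n / 2 + 1),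
    1 / (((n - 2 * r).factorial : ℚ) * (r.factorial : ℚ) * 2 ^ r)

/-- The telephone numbers, defined by the recurrence. -/
def tel : ℕ → ℚ
  | 0 => 1
  | 1 => 1
  | (n + 2) => tel (n + 1) + ((n : ℚ) + 1) * tel n

lemma tel_rec (j : ℕ) : tel (j + 1) = tel j + (j : ℚ) * tel (j - 1) := by
  cases j with
  | zero => simp [tel]
  | succ j => simp [tel]

/-- The summand of `telephone`, extended by zero. -/
noncomputable def gfun (n r : ℕ) : ℚ :=
  if 2 * r ≤ n then
    (n.factorial : ℚ) / (((n - 2 * r).factorial : ℚ) * (r.factorial : ℚ) * 2 ^ r)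
  else 0

lemma telephone_eq_sum (n : ℕ) : telephone n = ∑ r ∈ range (n + 1), gfun n r := by
  rw [telephone, Finset.mul_sum]
  refine (Finset.sum_subset (by
      intro x hx
      simp only [Finset.mem_range] at *
      omega) ?_).symm.trans (Finset.sum_congr rfl ?_) |>.symm
  · intro x hx hx'
    simp only [Finset.mem_range] at hx hx'
    have h2 : ¬ (2 * x ≤ n) := by omega
    simp [gfun, h2]
  · intro x hx
    simp only [Finset.mem_range] at hx
    have h2 : 2 * x ≤ n := by omega
    simp [gfun, h2, div_eq_mul_inv, one_div]

lemma gfun_rec (n r : ℕ) :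
    gfun (n + 2) (r + 1) = gfun (n + 1) (r + 1) + ((n : ℚ) + 1) * gfun n r := by
  rcases le_or_gt (2 * (r + 1)) (n + 1) with h | h
  · obtain ⟨d, rfl⟩ : ∃ d, n = 2 * r + 1 + d := ⟨n - (2 * r + 1), by omega⟩
    have h1 : 2 * (r + 1) ≤ 2 * r + 1 + d + 2 := by omega
    have h2 : 2 * (r + 1) ≤ 2 * r + 1 + d + 1 := by omega
    have h3 : 2 * r ≤ 2 * r + 1 + d := by omega
    rw [gfun, gfun, gfun, if_pos h1, if_pos h2, if_pos h3]
    have e1 : 2 * r + 1 + d + 2 - 2 * (r + 1) = d + 1 := by omega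
    have e2 : 2 * r + 1 + d + 1 - 2 * (r + 1) = d := by omega
    have e3 : 2 * r + 1 + d - 2 * r = d + 1 := by omega
    rw [e1, e2, e3]
    have f1 : (2 * r + 1 + d + 2).factorial
        = (2 * r + 1 + d + 2) * ((2 * r + 1 + d + 1) * (2 * r + 1 + d).factorial) := by
      rw [Nat.factorial_succ, Nat.factorial_succ]
    have f2 : (2 * r + 1 + d + 1).factorial
        = (2 * r + 1 + d + 1) * (2 * r + 1 + d).factorial := Nat.factorial_succ _
    have f3 : (d + 1).factorial = (d + 1) * d.factorial := Nat.factorial_succ _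
    have f4 : (r + 1).factorial = (r + 1) * r.factorial := Nat.factorial_succ _
    rw [f1, f2, f3, f4]
    have hd : (d.factorial : ℚ) ≠ 0 := Nat.cast_ne_zero.mpr d.factorial_ne_zero
    have hr : (r.factorial : ℚ) ≠ 0 := Nat.cast_ne_zero.mpr r.factorial_ne_zero
    have hN : ((2 * r + 1 + d).factorial : ℚ) ≠ 0 :=
      Nat.cast_ne_zero.mpr (2 * r + 1 + d).factorial_ne_zero
    push_cast
    field_simp
    ring
  · rcases le_or_gt (2 * (r + 1)) (n + 2) with h' | h'
    · obtain rfl : n = 2 * r := by omega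
      have h1 : 2 * (r + 1) ≤ 2 * r + 2 := by omega
      have h2 : ¬ (2 * (r + 1) ≤ 2 * r + 1) := by omega
      have h3 : 2 * r ≤ 2 * r := le_rfl
      rw [gfun, gfun, gfun, if_pos h1, if_neg h2, if_pos h3]
      have e1 : 2 * r + 2 - 2 * (r + 1) = 0 := by omega
      have e3 : 2 * r - 2 * r = 0 := by omega
      rw [e1, e3]
      have f1 : (2 * r + 2).factorial
          = (2 * r + 2) * ((2 * r + 1) * (2 * r).factorial) := by
        rw [Nat.factorial_succ, Nat.factorial_succ]
      have f4 : (r + 1).factorial = (r + 1) * r.factorial := Nat.factorial_succ _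
      rw [f1, f4]
      have hr : (r.factorial : ℚ) ≠ 0 := Nat.cast_ne_zero.mpr r.factorial_ne_zero
      have hN : ((2 * r).factorial : ℚ) ≠ 0 :=
        Nat.cast_ne_zero.mpr (2 * r).factorial_ne_zero
      push_cast
      field_simp
      ring
    · have h1 : ¬ (2 * (r + 1) ≤ n + 2) := by omega
      have h2 : ¬ (2 * (r + 1) ≤ n + 1) := by omega
      have h3 : ¬ (2 * r ≤ n) := by omega
      simp [gfun, h1, h2, h3]

lemma gfun_zero (n : ℕ) : gfun n 0 = 1 := by
  simp only [gfun, if_pos (by omega : 2 * 0 ≤ n)]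
  rw [Nat.sub_zero, Nat.factorial_zero]
  norm_num
  exact n.factorial_ne_zero

lemma telephone_rec (n : ℕ) :
    telephone (n + 2) = telephone (n + 1) + ((n : ℚ) + 1) * telephone n := by
  rw [telephone_eq_sum, telephone_eq_sum, telephone_eq_sum]
  rw [Finset.sum_range_succ' (fun r => gfun (n + 2) r) (n + 2)]
  rw [Finset.sum_range_succ' (fun r => gfun (n + 1) r) (n + 1)]
  have h1 : ∀ r ∈ range (n + 2),
      gfun (n + 2) (r + 1) = gfun (n + 1) (r + 1) + ((n : ℚ) + 1) * gfun n r :=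
    fun r _ => gfun_rec n r
  rw [Finset.sum_congr rfl h1, Finset.sum_add_distrib, ← Finset.mul_sum]
  rw [Finset.sum_range_succ (fun r => gfun (n + 1) (r + 1)) (n + 1)]
  rw [Finset.sum_range_succ (fun r => gfun n r) (n + 1)]
  have z1 : gfun (n + 1) (n + 1 + 1) = 0 := by
    rw [gfun, if_neg (by omega)]
  have z2 : gfun n (n + 1) = 0 := by
    rw [gfun, if_neg (by omega)]
  rw [z1, z2, gfun_zero, gfun_zero]
  ring

lemma telephone_eq_tel (n : ℕ) : telephone n = tel n := by
  induction n using Nat.strong_induction_on with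
  | _ n ih =>
    match n with
    | 0 => norm_num [telephone, tel]
    | 1 => norm_num [telephone, tel]
    | (n + 2) =>
      rw [telephone_rec, ih (n + 1) (by omega), ih n (by omega)]
      simp [tel]

/-- Auxiliary: both sides of the addition formula. -/
noncomputable def Aa (m n : ℕ) : ℚ :=
  ∑ k ∈ range (n + 1),
    (m.choose k : ℚ) * (n.choose k : ℚ) * (k.factorial : ℚ) * tel (m - k) * tel (n - k)

lemma sub_mul_choose (m k : ℕ) : (m - k) * m.choose k = m * (m - 1).choose k := by
  cases m with
  | zero => simp [Nat.zero_sub]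
  | succ m =>
    have h1 := Nat.choose_succ_right_eq (m + 1) k
    have h2 := Nat.add_one_mul_choose_eq m k
    simp only [Nat.add_sub_cancel]
    rw [mul_comm, ← h1, ← h2]

lemma Aa_zero_left (n : ℕ) : Aa 0 n = tel n := by
  rw [Aa]
  rw [Finset.sum_eq_single 0]
  · simp [tel]
  · intro k _ hk
    have : (0 : ℕ).choose k = 0 := Nat.choose_eq_zero_of_lt (Nat.pos_of_ne_zero hk)
    simp [this]
  · intro h
    simp at h

lemma Aa_zero_right (m : ℕ) : Aa m 0 = tel m := by
  simp [Aa, tel]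

lemma Aa_rec (m n : ℕ) :
    Aa (m + 1) (n + 1) = Aa m (n + 1) + (m : ℚ) * Aa (m - 1) (n + 1)
      + ((n : ℚ) + 1) * Aa m n := by
  have hL : Aa (m + 1) (n + 1)
      = (∑ k ∈ range (n + 1),
          (m.choose (k + 1) : ℚ) * ((n + 1).choose (k + 1) : ℚ)
            * ((k + 1).factorial : ℚ) * tel (m - k) * tel (n - k))
        + (∑ k ∈ range (n + 1),
          (m.choose k : ℚ) * ((n + 1).choose (k + 1) : ℚ)
            * ((k + 1).factorial : ℚ) * tel (m - k) * tel (n - k))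
        + tel (m + 1) * tel (n + 1) := by
    rw [Aa, Finset.sum_range_succ']
    have hpt : ∀ k ∈ range (n + 1),
        ((m + 1).choose (k + 1) : ℚ) * ((n + 1).choose (k + 1) : ℚ)
            * ((k + 1).factorial : ℚ) * tel (m + 1 - (k + 1)) * tel (n + 1 - (k + 1))
          = (m.choose (k + 1) : ℚ) * ((n + 1).choose (k + 1) : ℚ)
              * ((k + 1).factorial : ℚ) * tel (m - k) * tel (n - k)
            + (m.choose k : ℚ) * ((n + 1).choose (k + 1) : ℚ)
              * ((k + 1).factorial : ℚ) * tel (m - k) * tel (n - k) := by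
      intro k _
      have hc : ((m + 1).choose (k + 1) : ℚ) = (m.choose k : ℚ) + (m.choose (k + 1) : ℚ) := by
        rw [Nat.choose_succ_succ]; push_cast; ring
      have e1 : m + 1 - (k + 1) = m - k := by omega
      have e2 : n + 1 - (k + 1) = n - k := by omega
      rw [hc, e1, e2]; ring
    rw [Finset.sum_congr rfl hpt, Finset.sum_add_distrib]
    simp
  -- second sum is (n+1) * Aa m n
  have hS2 : (∑ k ∈ range (n + 1),
      (m.choose k : ℚ) * ((n + 1).choose (k + 1) : ℚ)
        * ((k + 1).factorial : ℚ) * tel (m - k) * tel (n - k))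
      = ((n : ℚ) + 1) * Aa m n := by
    rw [Aa, Finset.mul_sum]
    refine Finset.sum_congr rfl fun k _ => ?_
    have h2 := Nat.add_one_mul_choose_eq n k
    have h2q : ((n : ℚ) + 1) * (n.choose k : ℚ)
        = ((n + 1).choose (k + 1) : ℚ) * ((k : ℚ) + 1) := by
      exact_mod_cast congrArg (Nat.cast (R := ℚ)) h2
    have hf : ((k + 1).factorial : ℚ) = ((k : ℚ) + 1) * (k.factorial : ℚ) := by
      rw [Nat.factorial_succ]; push_cast; ring
    rw [hf]
    linear_combination (-((m.choose k : ℚ) * (k.factorial : ℚ) * tel (m - k) * tel (n - k))) * h2q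
  have hS1 : (∑ k ∈ range (n + 1),
        (m.choose (k + 1) : ℚ) * ((n + 1).choose (k + 1) : ℚ)
          * ((k + 1).factorial : ℚ) * tel (m - k) * tel (n - k))
        + tel (m + 1) * tel (n + 1)
      = ∑ j ∈ range (n + 1 + 1),
          (m.choose j : ℚ) * ((n + 1).choose j : ℚ) * (j.factorial : ℚ)
            * tel (m + 1 - j) * tel (n + 1 - j) := by
    rw [Finset.sum_range_succ'
      (fun j => (m.choose j : ℚ) * ((n + 1).choose j : ℚ) * (j.factorial : ℚ)
            * tel (m + 1 - j) * tel (n + 1 - j)) (n + 1)]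
    congr 1
    · refine Finset.sum_congr rfl fun k _ => ?_
      rw [show m + 1 - (k + 1) = m - k by omega, show n + 1 - (k + 1) = n - k by omega]
    · simp
  have hS : (∑ j ∈ range (n + 1 + 1),
        (m.choose j : ℚ) * ((n + 1).choose j : ℚ) * (j.factorial : ℚ)
          * tel (m + 1 - j) * tel (n + 1 - j))
      = Aa m (n + 1) + (m : ℚ) * Aa (m - 1) (n + 1) := by
    rw [Aa, Aa, Finset.mul_sum, ← Finset.sum_add_distrib]
    refine Finset.sum_congr rfl fun j _ => ?_
    rcases le_or_gt j m with hj | hj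
    · rw [show m + 1 - j = (m - j) + 1 by omega, tel_rec (m - j),
        show m - j - 1 = m - 1 - j by omega]
      have hc : ((m - j : ℕ) : ℚ) * (m.choose j : ℚ)
          = (m : ℚ) * (((m - 1).choose j : ℕ) : ℚ) := by
        exact_mod_cast congrArg (Nat.cast (R := ℚ)) (sub_mul_choose m j)
      linear_combination
        (((n + 1).choose j : ℚ) * (j.factorial : ℚ) * tel (m - 1 - j) * tel (n + 1 - j)) * hc
    · have c1 : m.choose j = 0 := Nat.choose_eq_zero_of_lt hj
      have c2 : (m - 1).choose j = 0 := Nat.choose_eq_zero_of_lt (by omega)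
      simp [c1, c2]
  rw [hL, hS2]
  rw [show (∑ k ∈ range (n + 1),
        (m.choose (k + 1) : ℚ) * ((n + 1).choose (k + 1) : ℚ)
          * ((k + 1).factorial : ℚ) * tel (m - k) * tel (n - k))
      + ((n : ℚ) + 1) * Aa m n + tel (m + 1) * tel (n + 1)
      = ((∑ k ∈ range (n + 1),
        (m.choose (k + 1) : ℚ) * ((n + 1).choose (k + 1) : ℚ)
          * ((k + 1).factorial : ℚ) * tel (m - k) * tel (n - k))
      + tel (m + 1) * tel (n + 1)) + ((n : ℚ) + 1) * Aa m n by ring]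
  rw [hS1, hS]

lemma Aa_eq : ∀ s : ℕ, ∀ m n : ℕ, m + n = s → Aa m n = tel (m + n) := by
  intro s
  induction s using Nat.strong_induction_on with
  | _ s ih =>
    intro m n hmn
    match m, n with
    | 0, n => rw [Aa_zero_left, Nat.zero_add]
    | (m + 1), 0 => rw [Aa_zero_right]
    | (m + 1), (n + 1) =>
      rw [Aa_rec]
      have h1 : Aa m (n + 1) = tel (m + n + 1) := by
        have := ih (m + n + 1) (by omega) m (n + 1) (by omega)
        rwa [show m + (n + 1) = m + n + 1 by omega] at this
      have h2 : Aa m n = tel (m + n) := ih (m + n) (by omega) m n rfl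
      have h3 : (m : ℚ) * Aa (m - 1) (n + 1) = (m : ℚ) * tel (m + n) := by
        cases m with
        | zero => simp
        | succ m =>
          have := ih (m + n + 1) (by omega) m (n + 1) (by omega)
          rw [show m + 1 - 1 = m from rfl, this]
          norm_num
          left
          congr 1
          omega
      rw [h1, h2, h3]
      have ht : tel (m + 1 + (n + 1)) = tel (m + n + 1) + ((m : ℚ) + (n : ℚ) + 1) * tel (m + n) := by
        have : m + 1 + (n + 1) = (m + n) + 2 := by omega
        rw [this, tel]
        push_cast
        ring
      rw [ht]
      ring

/-- the index-duplication identity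
`T(2n) = ∑_{r=0}^{n} C(n,r)² r! (T(n-r))²`. -/
theorem telephone_duplication (n : ℕ) :
    telephone (2 * n) =
      ∑ r ∈ range (n + 1),
        ((n.choose r : ℚ)) ^ 2 * (r.factorial : ℚ) * (telephone (n - r)) ^ 2 := by
  rw [telephone_eq_tel]
  have : ∑ r ∈ range (n + 1),
      ((n.choose r : ℚ)) ^ 2 * (r.factorial : ℚ) * (telephone (n - r)) ^ 2 = Aa n n := by
    rw [Aa]
    refine Finset.sum_congr rfl fun r _ => ?_
    rw [telephone_eq_tel]
    ring
  rw [this, Aa_eq (n + n) n n rfl, show 2 * n = n + n by omega]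
end
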